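/- arXiv:1106.2887 — 10 statements merged into one kernel-verified Lean document; each statement's English description precedes it below -/
import Mathlib

section
/- For every integer k ≥ 1, the k-th bivariate copula L-moment satisfies the copula representation δ_k = ∫₀¹∫₀¹ (C(u,v) − u v) · P_k′(v) dv du, where P_k′ is the derivative of the k-th shifted Legendre polynomial; that is, Cov(U₁, P_k(U₂)) = ∫₀¹∫₀¹ (C(u,v) − u v) P_k′(v) dv du for (U₁,U₂) distributed according to μ. -/
open MeasureTheory Set

/-- The `k`-th shifted Legendre polynomial
`P_k(u) = ∑_{ℓ=0}^{k} (−1)^{k+ℓ} (k+ℓ)!/((ℓ!)² (k−ℓ)!) u^ℓ`. -/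
noncomputable def shiftedLegendre (k : ℕ) (u : ℝ) : ℝ :=
  ∑ l ∈ Finset.range (k + 1),
    (-1 : ℝ) ^ (k + l) * (Nat.factorial (k + l) : ℝ) /
      ((Nat.factorial l : ℝ) ^ 2 * (Nat.factorial (k - l) : ℝ)) * u ^ l

lemma shiftedLegendre_poly (k : ℕ) :
    ∃ p : Polynomial ℝ, (∀ x, shiftedLegendre k x = Polynomial.eval x p) ∧
      (∀ x, deriv (shiftedLegendre k) x = Polynomial.eval x p.derivative) := by
  refine ⟨∑ l ∈ Finset.range (k + 1),
      Polynomial.C ((-1 : ℝ) ^ (k + l) * (Nat.factorial (k + l) : ℝ) /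
        ((Nat.factorial l : ℝ) ^ 2 * (Nat.factorial (k - l) : ℝ))) * Polynomial.X ^ l,
      ?_, ?_⟩
  · intro x
    simp [shiftedLegendre, Polynomial.eval_finset_sum]
  · intro x
    have h : shiftedLegendre k = fun x => Polynomial.eval x
        (∑ l ∈ Finset.range (k + 1),
          Polynomial.C ((-1 : ℝ) ^ (k + l) * (Nat.factorial (k + l) : ℝ) /
            ((Nat.factorial l : ℝ) ^ 2 * (Nat.factorial (k - l) : ℝ))) * Polynomial.X ^ l) := by
      funext y
      simp [shiftedLegendre, Polynomial.eval_finset_sum]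
    rw [h]
    exact Polynomial.deriv _

/-- **Copula representation of the bivariate L-moments.** -/
theorem copula_Lmoment_representation
    (μ : Measure (ℝ × ℝ)) [IsProbabilityMeasure μ]
    (h1 : μ.map Prod.fst = volume.restrict (Icc (0:ℝ) 1))
    (h2 : μ.map Prod.snd = volume.restrict (Icc (0:ℝ) 1))
    (C : ℝ → ℝ → ℝ)
    (hC : ∀ u v : ℝ, C u v = (μ (Icc 0 u ×ˢ Icc 0 v)).toReal)
    (k : ℕ) (hk : 1 ≤ k) :
    (∫ p, p.1 * shiftedLegendre k p.2 ∂μ)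
        - (∫ p, p.1 ∂μ) * (∫ p, shiftedLegendre k p.2 ∂μ)
      = ∫ u in (0:ℝ)..1, ∫ v in (0:ℝ)..1,
          (C u v - u * v) * deriv (shiftedLegendre k) v := by
  clear hk
  obtain ⟨q, hq, hq'⟩ := shiftedLegendre_poly k
  set P : ℝ → ℝ := shiftedLegendre k with hPdef
  set Q : ℝ → ℝ := deriv (shiftedLegendre k) with hQdef
  have hPfun : P = fun x => Polynomial.eval x q := funext hq
  have hQfun : Q = fun x => Polynomial.eval x q.derivative := funext hq'
  have hPc : Continuous P := by rw [hPfun]; exact q.continuous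
  have hQc : Continuous Q := by rw [hQfun]; exact q.derivative.continuous
  have hPm : Measurable P := hPc.measurable
  have hQm : Measurable Q := hQc.measurable
  -- FTC
  have hPdiff : Differentiable ℝ P := by rw [hPfun]; exact q.differentiable
  have hFTC : ∀ b : ℝ, (∫ v in b..1, Q v) = P 1 - P b := by
    intro b
    exact intervalIntegral.integral_deriv_eq_sub
      (fun x _ => hPdiff x) (hQc.intervalIntegrable _ _)
  -- bounds
  obtain ⟨M, hM⟩ : ∃ M, ∀ x ∈ Icc (0:ℝ) 1, ‖P x‖ ≤ M :=
    isCompact_Icc.exists_bound_of_continuousOn hPc.continuousOn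
  obtain ⟨N, hN⟩ : ∃ N, ∀ x ∈ Icc (0:ℝ) 1, ‖Q x‖ ≤ N :=
    isCompact_Icc.exists_bound_of_continuousOn hQc.continuousOn
  have hN0 : 0 ≤ N := le_trans (norm_nonneg _) (hN 0 ⟨le_refl _, zero_le_one⟩)
  -- support of μ
  have hsupp : ∀ᵐ p ∂μ, p.1 ∈ Icc (0:ℝ) 1 ∧ p.2 ∈ Icc (0:ℝ) 1 := by
    have e1 : μ (Prod.fst ⁻¹' (Icc (0:ℝ) 1)ᶜ) = 0 := by
      rw [← Measure.map_apply measurable_fst measurableSet_Icc.compl, h1,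
        Measure.restrict_apply measurableSet_Icc.compl]
      simp
    have e2 : μ (Prod.snd ⁻¹' (Icc (0:ℝ) 1)ᶜ) = 0 := by
      rw [← Measure.map_apply measurable_snd measurableSet_Icc.compl, h2,
        Measure.restrict_apply measurableSet_Icc.compl]
      simp
    have a1 : ∀ᵐ p ∂μ, p.1 ∈ Icc (0:ℝ) 1 := by
      rw [ae_iff]; exact e1
    have a2 : ∀ᵐ p ∂μ, p.2 ∈ Icc (0:ℝ) 1 := by
      rw [ae_iff]; exact e2
    filter_upwards [a1, a2] with p hp1 hp2 using ⟨hp1, hp2⟩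
  -- integrability over μ
  have int1 : Integrable (fun p : ℝ × ℝ => p.1) μ := by
    refine Integrable.mono' (integrable_const 1) measurable_fst.aestronglyMeasurable ?_
    filter_upwards [hsupp] with p hp
    rw [Real.norm_eq_abs, abs_le]
    exact ⟨by linarith [hp.1.1], hp.1.2⟩
  have int2 : Integrable (fun p : ℝ × ℝ => P p.2) μ := by
    refine Integrable.mono' (integrable_const M)
      ((hPm.comp measurable_snd).aestronglyMeasurable) ?_
    filter_upwards [hsupp] with p hp using hM _ hp.2
  have int3 : Integrable (fun p : ℝ × ℝ => p.1 * P p.2) μ := by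
    refine Integrable.mono' (integrable_const M)
      ((measurable_fst.mul (hPm.comp measurable_snd)).aestronglyMeasurable) ?_
    filter_upwards [hsupp] with p hp
    have hb1 : |p.1| ≤ 1 := abs_le.2 ⟨by linarith [hp.1.1], hp.1.2⟩
    calc ‖p.1 * P p.2‖ = |p.1| * ‖P p.2‖ := by rw [norm_mul]; rfl
      _ ≤ 1 * M := mul_le_mul hb1 (hM _ hp.2) (norm_nonneg _) zero_le_one
      _ = M := one_mul M
  -- marginal computations
  have hhalf : (∫ x in Ioc (0:ℝ) 1, x ∂volume) = 1/2 := by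
    rw [← intervalIntegral.integral_of_le zero_le_one, integral_id]
    norm_num
  have hB : (∫ p, p.1 ∂μ) = 1/2 := by
    have hmap := integral_map (measurable_fst.aemeasurable (μ := μ))
      (f := fun x : ℝ => x) aestronglyMeasurable_id
    rw [h1] at hmap
    rw [← hmap, integral_Icc_eq_integral_Ioc, hhalf]
  have hD : (∫ p, P p.2 ∂μ) = ∫ v in (0:ℝ)..1, P v := by
    have hmap := integral_map (measurable_snd.aemeasurable (μ := μ))
      (f := P) hPc.aestronglyMeasurable
    rw [h2] at hmap
    rw [← hmap, integral_Icc_eq_integral_Ioc, intervalIntegral.integral_of_le zero_le_one]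
  -- integration by parts
  have hIBP : (∫ v in (0:ℝ)..1, v * Q v) = P 1 - ∫ v in (0:ℝ)..1, P v := by
    have hu : ∀ x ∈ uIcc (0:ℝ) 1, HasDerivAt (fun y : ℝ => y) ((fun _ : ℝ => (1:ℝ)) x) x :=
      fun x _ => hasDerivAt_id x
    have hv : ∀ x ∈ uIcc (0:ℝ) 1, HasDerivAt P (Q x) x := by
      intro x _
      rw [hq' x, hPfun]
      exact q.hasDerivAt x
    have h := intervalIntegral.integral_mul_deriv_eq_deriv_mul hu hv
      (continuous_const.intervalIntegrable 0 1) (hQc.intervalIntegrable 0 1)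
    simpa using h
  -- bound on C
  have hC01 : ∀ u v : ℝ, 0 ≤ C u v ∧ C u v ≤ 1 := by
    intro u v
    rw [hC]
    refine ⟨ENNReal.toReal_nonneg, ?_⟩
    have hle : μ (Icc 0 u ×ˢ Icc 0 v) ≤ 1 := prob_le_one
    have := ENNReal.toReal_mono (by norm_num) hle
    simpa using this
  -- measurability of C
  have hSmeas : MeasurableSet {z : (ℝ × ℝ) × (ℝ × ℝ) | z.2 ∈ Icc 0 z.1.1 ×ˢ Icc 0 z.1.2} := by
    have e : {z : (ℝ × ℝ) × (ℝ × ℝ) | z.2 ∈ Icc 0 z.1.1 ×ˢ Icc 0 z.1.2}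
        = ({z : (ℝ × ℝ) × (ℝ × ℝ) | 0 ≤ z.2.1} ∩ {z | z.2.1 ≤ z.1.1}) ∩
          ({z | 0 ≤ z.2.2} ∩ {z | z.2.2 ≤ z.1.2}) := by
      ext z
      simp only [Set.mem_prod, Set.mem_Icc, Set.mem_setOf_eq, Set.mem_inter_iff]
    rw [e]
    exact (((measurableSet_le measurable_const (measurable_fst.comp measurable_snd)).inter
        (measurableSet_le (measurable_fst.comp measurable_snd)
          (measurable_fst.comp measurable_fst))).inter
      ((measurableSet_le measurable_const (measurable_snd.comp measurable_snd)).inter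
        (measurableSet_le (measurable_snd.comp measurable_snd)
          (measurable_snd.comp measurable_fst))))
  have hCm : Measurable (fun z : ℝ × ℝ => C z.1 z.2) := by
    have e : (fun z : ℝ × ℝ => C z.1 z.2) = fun z =>
        (μ (Prod.mk z ⁻¹' {w : (ℝ × ℝ) × (ℝ × ℝ) | w.2 ∈ Icc 0 w.1.1 ×ˢ Icc 0 w.1.2})).toReal := by
      funext z
      rw [hC]
      congr 1
    rw [e]
    exact (measurable_measure_prodMk_left hSmeas).ennreal_toReal
  -- the uniform measures
  haveI hνprob : IsProbabilityMeasure (volume.restrict (Ioc (0:ℝ) 1)) := by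
    constructor
    simp
  have haeν : ∀ᵐ z ∂((volume.restrict (Ioc (0:ℝ) 1)).prod (volume.restrict (Ioc (0:ℝ) 1))),
      z ∈ Ioc (0:ℝ) 1 ×ˢ Ioc (0:ℝ) 1 := by
    rw [Measure.prod_restrict]
    exact ae_restrict_mem (measurableSet_Ioc.prod measurableSet_Ioc)
  -- RHS as product-measure integral
  have hfm : Measurable (fun z : ℝ × ℝ => (C z.1 z.2 - z.1 * z.2) * Q z.2) :=
    (hCm.sub (measurable_fst.mul measurable_snd)).mul (hQm.comp measurable_snd)
  have hfint : Integrable (fun z : ℝ × ℝ => (C z.1 z.2 - z.1 * z.2) * Q z.2)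
      ((volume.restrict (Ioc (0:ℝ) 1)).prod (volume.restrict (Ioc (0:ℝ) 1))) := by
    refine Integrable.mono' (integrable_const (2 * N)) hfm.aestronglyMeasurable ?_
    filter_upwards [haeν] with z hz
    have hz1 := hz.1
    have hz2 := hz.2
    have hb1 : |C z.1 z.2 - z.1 * z.2| ≤ 2 := by
      have h0 := hC01 z.1 z.2
      have : |z.1 * z.2| ≤ 1 := by
        rw [abs_mul]
        have a1 : |z.1| ≤ 1 := abs_le.2 ⟨by linarith [hz1.1], hz1.2⟩
        have a2 : |z.2| ≤ 1 := abs_le.2 ⟨by linarith [hz2.1], hz2.2⟩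
        calc |z.1| * |z.2| ≤ 1 * 1 := mul_le_mul a1 a2 (abs_nonneg _) zero_le_one
          _ = 1 := one_mul 1
      have habs : |C z.1 z.2| ≤ 1 := abs_le.2 ⟨by linarith [h0.1], h0.2⟩
      calc |C z.1 z.2 - z.1 * z.2| ≤ |C z.1 z.2| + |z.1 * z.2| := abs_sub _ _
        _ ≤ 1 + 1 := add_le_add habs this
        _ = 2 := by norm_num
    have hb2 : ‖Q z.2‖ ≤ N := hN _ ⟨le_of_lt hz2.1, hz2.2⟩
    calc ‖(C z.1 z.2 - z.1 * z.2) * Q z.2‖ = |C z.1 z.2 - z.1 * z.2| * ‖Q z.2‖ := by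
          rw [norm_mul]; rfl
      _ ≤ 2 * N := mul_le_mul hb1 hb2 (norm_nonneg _) (by norm_num)
  have hRHS : (∫ u in (0:ℝ)..1, ∫ v in (0:ℝ)..1, (C u v - u * v) * Q v)
      = ∫ z, (C z.1 z.2 - z.1 * z.2) * Q z.2
          ∂((volume.restrict (Ioc (0:ℝ) 1)).prod (volume.restrict (Ioc (0:ℝ) 1))) := by
    rw [MeasureTheory.integral_prod _ hfint]
    simp only [intervalIntegral.integral_of_le (zero_le_one : (0:ℝ) ≤ 1)]
  -- split the product integral
  have hint1 : Integrable (fun z : ℝ × ℝ => C z.1 z.2 * Q z.2)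
      ((volume.restrict (Ioc (0:ℝ) 1)).prod (volume.restrict (Ioc (0:ℝ) 1))) := by
    refine Integrable.mono' (integrable_const N)
      ((hCm.mul (hQm.comp measurable_snd)).aestronglyMeasurable) ?_
    filter_upwards [haeν] with z hz
    have h0 := hC01 z.1 z.2
    have habs : |C z.1 z.2| ≤ 1 := abs_le.2 ⟨by linarith [h0.1], h0.2⟩
    have hb2 : ‖Q z.2‖ ≤ N := hN _ ⟨le_of_lt hz.2.1, hz.2.2⟩
    calc ‖C z.1 z.2 * Q z.2‖ = |C z.1 z.2| * ‖Q z.2‖ := by rw [norm_mul]; rfl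
      _ ≤ 1 * N := mul_le_mul habs hb2 (norm_nonneg _) zero_le_one
      _ = N := one_mul N
  have hint2 : Integrable (fun z : ℝ × ℝ => z.1 * (z.2 * Q z.2))
      ((volume.restrict (Ioc (0:ℝ) 1)).prod (volume.restrict (Ioc (0:ℝ) 1))) := by
    refine Integrable.mono' (integrable_const N)
      ((measurable_fst.mul (measurable_snd.mul (hQm.comp measurable_snd))).aestronglyMeasurable) ?_
    filter_upwards [haeν] with z hz
    have a1 : |z.1| ≤ 1 := abs_le.2 ⟨by linarith [hz.1.1], hz.1.2⟩
    have a2 : |z.2| ≤ 1 := abs_le.2 ⟨by linarith [hz.2.1], hz.2.2⟩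
    have hb2 : ‖Q z.2‖ ≤ N := hN _ ⟨le_of_lt hz.2.1, hz.2.2⟩
    calc ‖z.1 * (z.2 * Q z.2)‖ = |z.1| * (|z.2| * ‖Q z.2‖) := by
          rw [norm_mul, norm_mul]; rfl
      _ ≤ 1 * (1 * N) := by
          refine mul_le_mul a1 ?_ (by positivity) zero_le_one
          exact mul_le_mul a2 hb2 (norm_nonneg _) zero_le_one
      _ = N := by ring
  have hsplit : (∫ z, (C z.1 z.2 - z.1 * z.2) * Q z.2
          ∂((volume.restrict (Ioc (0:ℝ) 1)).prod (volume.restrict (Ioc (0:ℝ) 1))))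
      = (∫ z, C z.1 z.2 * Q z.2
          ∂((volume.restrict (Ioc (0:ℝ) 1)).prod (volume.restrict (Ioc (0:ℝ) 1))))
        - ∫ z, z.1 * (z.2 * Q z.2)
          ∂((volume.restrict (Ioc (0:ℝ) 1)).prod (volume.restrict (Ioc (0:ℝ) 1))) := by
    rw [← integral_sub hint1 hint2]
    apply integral_congr_ae
    filter_upwards with z
    ring
  -- second term
  have hsecond : (∫ z, z.1 * (z.2 * Q z.2)
        ∂((volume.restrict (Ioc (0:ℝ) 1)).prod (volume.restrict (Ioc (0:ℝ) 1))))
      = (1/2) * (P 1 - ∫ v in (0:ℝ)..1, P v) := by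
    rw [MeasureTheory.integral_prod_mul (μ := volume.restrict (Ioc (0:ℝ) 1))
      (ν := volume.restrict (Ioc (0:ℝ) 1)) (fun u : ℝ => u) (fun v : ℝ => v * Q v)]
    have e2 : (∫ v in Ioc (0:ℝ) 1, v * Q v ∂volume) = P 1 - ∫ v in (0:ℝ)..1, P v := by
      rw [← intervalIntegral.integral_of_le zero_le_one]
      exact hIBP
    rw [hhalf, e2]
  -- first term: the Fubini argument
  have hfirst : (∫ z, C z.1 z.2 * Q z.2
        ∂((volume.restrict (Ioc (0:ℝ) 1)).prod (volume.restrict (Ioc (0:ℝ) 1))))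
      = ∫ p, (1 - p.1) * (P 1 - P p.2) ∂μ := by
    have e1 : ∀ z : ℝ × ℝ, C z.1 z.2 * Q z.2
        = ∫ p, (Icc 0 z.1 ×ˢ Icc 0 z.2).indicator 1 p * Q z.2 ∂μ := by
      intro z
      rw [MeasureTheory.integral_mul_const, hC]
      congr 1
      exact (integral_indicator_one (measurableSet_Icc.prod measurableSet_Icc)).symm
    simp_rw [e1]
    have hFints : Integrable
        (Function.uncurry (fun (z : ℝ × ℝ) (p : ℝ × ℝ) =>
          (Icc 0 z.1 ×ˢ Icc 0 z.2).indicator 1 p * Q z.2))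
        (((volume.restrict (Ioc (0:ℝ) 1)).prod (volume.restrict (Ioc (0:ℝ) 1))).prod μ) := by
      have hmeas : Measurable (Function.uncurry (fun (z : ℝ × ℝ) (p : ℝ × ℝ) =>
          (Icc 0 z.1 ×ˢ Icc 0 z.2).indicator 1 p * Q z.2)) := by
        have e : Function.uncurry (fun (z : ℝ × ℝ) (p : ℝ × ℝ) =>
            (Icc 0 z.1 ×ˢ Icc 0 z.2).indicator 1 p * Q z.2)
            = fun w : (ℝ × ℝ) × (ℝ × ℝ) =>
              ({w : (ℝ × ℝ) × (ℝ × ℝ) | w.2 ∈ Icc 0 w.1.1 ×ˢ Icc 0 w.1.2}.indicator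
                (fun _ => (1:ℝ)) w) * Q w.1.2 := by
          funext w
          simp only [Function.uncurry, Set.indicator_apply, Set.mem_setOf_eq, Pi.one_apply]
        rw [e]
        exact (measurable_const.indicator hSmeas).mul
          (hQm.comp (measurable_snd.comp measurable_fst))
      have haeπ : ∀ᵐ w ∂(((volume.restrict (Ioc (0:ℝ) 1)).prod
            (volume.restrict (Ioc (0:ℝ) 1))).prod μ),
          w.1 ∈ Ioc (0:ℝ) 1 ×ˢ Ioc (0:ℝ) 1 := by
        rw [ae_iff]
        have e : {w : (ℝ × ℝ) × (ℝ × ℝ) | ¬ w.1 ∈ Ioc (0:ℝ) 1 ×ˢ Ioc (0:ℝ) 1}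
            = Prod.fst ⁻¹' (Ioc (0:ℝ) 1 ×ˢ Ioc (0:ℝ) 1)ᶜ := rfl
        rw [e, ← Measure.map_apply measurable_fst
          ((measurableSet_Ioc.prod measurableSet_Ioc).compl), Measure.map_fst_prod]
        simp [Measure.prod_restrict, Measure.restrict_apply
          ((measurableSet_Ioc.prod measurableSet_Ioc).compl)]
      refine Integrable.mono' (integrable_const N) hmeas.aestronglyMeasurable ?_
      filter_upwards [haeπ] with w hw
      have hb2 : ‖Q w.1.2‖ ≤ N := hN _ ⟨le_of_lt hw.2.1, hw.2.2⟩
      have hind : |((Icc 0 w.1.1 ×ˢ Icc 0 w.1.2).indicator 1 w.2 : ℝ)| ≤ 1 := by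
        rw [Set.indicator_apply]
        split_ifs <;> simp
      calc ‖Function.uncurry (fun (z : ℝ × ℝ) (p : ℝ × ℝ) =>
              (Icc 0 z.1 ×ˢ Icc 0 z.2).indicator 1 p * Q z.2) w‖
          = |(Icc 0 w.1.1 ×ˢ Icc 0 w.1.2).indicator 1 w.2| * ‖Q w.1.2‖ := by
            simp only [Function.uncurry]
            rw [norm_mul]; rfl
        _ ≤ 1 * N := mul_le_mul hind hb2 (norm_nonneg _) zero_le_one
        _ = N := one_mul N
    rw [MeasureTheory.integral_integral_swap hFints]
    apply integral_congr_ae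
    filter_upwards [hsupp] with p hp
    obtain ⟨⟨hp1, hp1'⟩, hp2, hp2'⟩ := hp
    have efac : ∀ z : ℝ × ℝ, (Icc 0 z.1 ×ˢ Icc 0 z.2).indicator 1 p * Q z.2
        = (Ici p.1).indicator (fun _ => (1:ℝ)) z.1 * ((Ici p.2).indicator Q z.2) := by
      intro z
      rw [Set.indicator_apply, Set.indicator_apply, Set.indicator_apply]
      by_cases ha : p.1 ≤ z.1 <;> by_cases hb : p.2 ≤ z.2 <;>
        simp [Set.mem_prod, Set.mem_Icc, Set.mem_Ici, Pi.one_apply, Prod.le_def,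
          ha, hb, hp1, hp2]
    simp_rw [efac]
    rw [MeasureTheory.integral_prod_mul (μ := volume.restrict (Ioc (0:ℝ) 1))
      (ν := volume.restrict (Ioc (0:ℝ) 1)) ((Ici p.1).indicator (fun _ => (1:ℝ)))
      ((Ici p.2).indicator Q)]
    have ea : (∫ x in Ioc (0:ℝ) 1, (Ici p.1).indicator (fun _ => (1:ℝ)) x ∂volume)
        = 1 - p.1 := by
      have : (∫ x in Ioc (0:ℝ) 1, (Ici p.1).indicator (fun _ => (1:ℝ)) x ∂volume)
          = ((volume.restrict (Ioc (0:ℝ) 1)) (Ici p.1)).toReal := by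
        exact integral_indicator_one measurableSet_Ici
      rw [this, Measure.restrict_apply measurableSet_Ici]
      have hmeq : volume (Ici p.1 ∩ Ioc (0:ℝ) 1) = ENNReal.ofReal (1 - p.1) := by
        apply le_antisymm
        · calc volume (Ici p.1 ∩ Ioc (0:ℝ) 1) ≤ volume (Icc p.1 1) := by
                apply measure_mono
                rintro x ⟨hxa, _, hx1⟩
                exact ⟨hxa, hx1⟩
            _ = ENNReal.ofReal (1 - p.1) := Real.volume_Icc
        · calc ENNReal.ofReal (1 - p.1) = volume (Ioc p.1 1) := Real.volume_Ioc.symm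
            _ ≤ volume (Ici p.1 ∩ Ioc (0:ℝ) 1) := by
                apply measure_mono
                rintro x ⟨hxa, hx1⟩
                exact ⟨le_of_lt hxa, lt_of_le_of_lt hp1 hxa, hx1⟩
      rw [hmeq, ENNReal.toReal_ofReal (by linarith)]
    have eb : (∫ x in Ioc (0:ℝ) 1, (Ici p.2).indicator Q x ∂volume) = P 1 - P p.2 := by
      rw [integral_indicator measurableSet_Ici,
        Measure.restrict_restrict measurableSet_Ici]
      have hsets : (Ici p.2 ∩ Ioc (0:ℝ) 1 : Set ℝ) =ᵐ[volume] Ioc p.2 1 := by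
        rw [MeasureTheory.ae_eq_set]
        constructor
        · refine measure_mono_null (fun x hx => ?_) (measure_singleton p.2)
          obtain ⟨⟨hxa, _, hx1⟩, hxn⟩ := hx
          simp only [Set.mem_Ioc, not_and, not_le, Set.mem_singleton_iff] at hxn ⊢
          by_contra hne
          have : p.2 < x := lt_of_le_of_ne hxa (Ne.symm hne)
          exact absurd (hxn this) (not_lt.2 hx1)
        · refine measure_mono_null (fun x hx => ?_) (measure_empty (μ := volume))
          obtain ⟨⟨hxa, hx1⟩, hxn⟩ := hx
          exact absurd ⟨le_of_lt hxa, lt_of_le_of_lt hp2 hxa, hx1⟩ hxn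
      rw [setIntegral_congr_set hsets, ← intervalIntegral.integral_of_le hp2', hFTC]
    rw [ea, eb]
  -- expand the μ-integral
  have hexp : (∫ p, (1 - p.1) * (P 1 - P p.2) ∂μ)
      = P 1 - P 1 * (∫ p, p.1 ∂μ) - (∫ p, P p.2 ∂μ) + ∫ p, p.1 * P p.2 ∂μ := by
    have e : (fun p : ℝ × ℝ => (1 - p.1) * (P 1 - P p.2))
        = fun p => ((P 1 : ℝ) - P 1 * p.1) - (P p.2 - p.1 * P p.2) := by
      funext p; ring
    have ia : Integrable (fun p : ℝ × ℝ => (P 1 : ℝ) - P 1 * p.1) μ :=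
      (integrable_const (P 1)).sub (int1.const_mul (P 1))
    have ib : Integrable (fun p : ℝ × ℝ => P p.2 - p.1 * P p.2) μ := int2.sub int3
    rw [e, integral_sub ia ib,
      integral_sub (integrable_const (P 1)) (int1.const_mul (P 1)),
      integral_sub int2 int3, integral_const, integral_const_mul]
    simp [measure_univ]
    ring
  -- assemble
  rw [hRHS, hsplit, hfirst, hsecond, hexp, hB, hD]
  ring
end

section
/- The first three bivariate copula L-moments have the representations: δ₁ = 2∫₀¹∫₀¹ C(u₁,u₂) du₁du₂ − 1/2, δ₂ = 6∫₀¹∫₀¹ (2u₂ − 1) C(u₁,u₂) du₁du₂ − 1/2, and δ₃ = ∫₀¹∫₀¹ (60u₂² − 60u₂ + 12) C(u₁,u₂) du₁du₂ − 1/2. -/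
open MeasureTheory Set Function
set_option maxHeartbeats 1000000

/-- The `k`-th bivariate copula L-moment `δ_k = Cov(U₁, P_k(U₂))` of `μ`. -/
noncomputable def copulaLMoment (μ : MeasureTheory.Measure (ℝ × ℝ)) (k : ℕ) : ℝ :=
  (∫ p, p.1 * shiftedLegendre k p.2 ∂μ)
    - (∫ p, p.1 ∂μ) * (∫ p, shiftedLegendre k p.2 ∂μ)

lemma sl1 : shiftedLegendre 1 = fun u => 2*u - 1 := by
  funext u
  norm_num [shiftedLegendre, Finset.sum_range_succ, Nat.factorial]
  ring

lemma sl2 : shiftedLegendre 2 = fun u => 6*u^2 - 6*u + 1 := by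
  funext u
  norm_num [shiftedLegendre, Finset.sum_range_succ, Nat.factorial]
  ring

lemma sl3 : shiftedLegendre 3 = fun u => 20*u^3 - 30*u^2 + 12*u - 1 := by
  funext u
  norm_num [shiftedLegendre, Finset.sum_range_succ, Nat.factorial]
  ring

lemma key (μ : Measure (ℝ × ℝ)) [IsProbabilityMeasure μ]
    (h1 : μ.map Prod.fst = volume.restrict (Icc (0:ℝ) 1))
    (h2 : μ.map Prod.snd = volume.restrict (Icc (0:ℝ) 1))
    (g G : ℝ → ℝ) (hg : Continuous g) (hG : ∀ x, HasDerivAt G (g x) x) :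
    ∫ u in Icc (0:ℝ) 1, ∫ v in Icc (0:ℝ) 1, g v * (μ (Icc 0 u ×ˢ Icc 0 v)).toReal
      = ∫ p, (1 - p.1) * (G 1 - G p.2) ∂μ := by
  have hs : MeasurableSet (Icc (0:ℝ) 1) := measurableSet_Icc
  haveI hprob : IsProbabilityMeasure (volume.restrict (Icc (0:ℝ) 1)) := by
    constructor
    rw [Measure.restrict_apply MeasurableSet.univ]
    simp [Real.volume_Icc]
  set ν : Measure (ℝ × ℝ) := (volume.restrict (Icc (0:ℝ) 1)).prod
    (volume.restrict (Icc (0:ℝ) 1)) with hν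
  -- a.e. facts
  have hX : ∀ᵐ p ∂μ, p.1 ∈ Icc (0:ℝ) 1 := by
    rw [ae_iff]
    have h : {p : ℝ×ℝ | ¬ p.1 ∈ Icc (0:ℝ) 1} = Prod.fst ⁻¹' (Icc (0:ℝ) 1)ᶜ := rfl
    rw [h, ← Measure.map_apply measurable_fst hs.compl, h1,
      Measure.restrict_apply hs.compl]
    simp
  have hY : ∀ᵐ p ∂μ, p.2 ∈ Icc (0:ℝ) 1 := by
    rw [ae_iff]
    have h : {p : ℝ×ℝ | ¬ p.2 ∈ Icc (0:ℝ) 1} = Prod.snd ⁻¹' (Icc (0:ℝ) 1)ᶜ := rfl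
    rw [h, ← Measure.map_apply measurable_snd hs.compl, h2,
      Measure.restrict_apply hs.compl]
    simp
  have hνs : ν {w : ℝ×ℝ | w.2 ∉ Icc (0:ℝ) 1} = 0 := by
    have h : {w : ℝ×ℝ | w.2 ∉ Icc (0:ℝ) 1} = (univ : Set ℝ) ×ˢ (Icc (0:ℝ) 1)ᶜ := by
      ext w; simp
    rw [h, hν, Measure.prod_prod, Measure.restrict_apply hs.compl]
    simp
  -- bound for g
  obtain ⟨M0, hM0⟩ := isCompact_Icc.exists_bound_of_continuousOn
    (hg.continuousOn (s := Icc (0:ℝ) 1))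
  set M : ℝ := max M0 0 with hM
  have hMnn : 0 ≤ M := le_max_right _ _
  have hMb : ∀ x ∈ Icc (0:ℝ) 1, ‖g x‖ ≤ M := fun x hx => (hM0 x hx).trans (le_max_left _ _)
  -- the big indicator function
  set T : Set ((ℝ×ℝ)×(ℝ×ℝ)) :=
    {q | 0 ≤ q.2.1 ∧ q.2.1 ≤ q.1.1 ∧ 0 ≤ q.2.2 ∧ q.2.2 ≤ q.1.2} with hTdef
  have hT : MeasurableSet T := by
    have : T = ({q : (ℝ×ℝ)×(ℝ×ℝ) | 0 ≤ q.2.1} ∩ ({q | q.2.1 ≤ q.1.1} ∩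
        ({q | 0 ≤ q.2.2} ∩ {q | q.2.2 ≤ q.1.2}))) := by
      ext q; simp [hTdef, and_assoc]
    rw [this]
    exact (((isClosed_le continuous_const (continuous_fst.comp continuous_snd)).inter
      (((isClosed_le (continuous_fst.comp continuous_snd) (continuous_fst.comp continuous_fst)).inter
        ((isClosed_le continuous_const (continuous_snd.comp continuous_snd)).inter
          (isClosed_le (continuous_snd.comp continuous_snd) (continuous_snd.comp continuous_fst))))))).measurableSet
  set f : (ℝ×ℝ) → (ℝ×ℝ) → ℝ := fun w p => T.indicator (fun q => g q.1.2) (w, p) with hfdef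
  have huncurry : Function.uncurry f = T.indicator (fun q => g q.1.2) := rfl
  have hFmeas : Measurable (Function.uncurry f) := by
    rw [huncurry]
    exact (hg.measurable.comp measurable_fst.snd).indicator hT
  have hae2 : ∀ᵐ q ∂(ν.prod μ), q.1.2 ∈ Icc (0:ℝ) 1 := by
    rw [ae_iff]
    have h : {q : (ℝ×ℝ)×(ℝ×ℝ) | ¬ q.1.2 ∈ Icc (0:ℝ) 1}
        = {w : ℝ×ℝ | w.2 ∉ Icc (0:ℝ) 1} ×ˢ (univ : Set (ℝ×ℝ)) := by ext q; simp
    rw [h, Measure.prod_prod, hνs, zero_mul]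
  have hInt : Integrable (Function.uncurry f) (ν.prod μ) := by
    refine Integrable.mono' (integrable_const M) hFmeas.aestronglyMeasurable ?_
    filter_upwards [hae2] with q hq
    rw [huncurry]
    by_cases hqT : q ∈ T
    · rw [Set.indicator_of_mem hqT]; exact hMb _ hq
    · rw [Set.indicator_of_notMem hqT]; simpa using hMnn
  -- step 1 : inner μ-integral
  have step1 : ∀ w : ℝ×ℝ, ∫ p, f w p ∂μ = g w.2 * (μ (Icc 0 w.1 ×ˢ Icc 0 w.2)).toReal := by
    intro w
    have hfw : f w = (Icc 0 w.1 ×ˢ Icc 0 w.2).indicator (fun _ => g w.2) := by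
      funext p
      rw [hfdef]
      simp only [Set.indicator_apply]
      have hiff : ((w, p) ∈ T) ↔ p ∈ Icc 0 w.1 ×ˢ Icc 0 w.2 := by
        simp [hTdef, Set.mem_prod, mem_Icc, Prod.le_def]
        tauto
      rw [if_congr hiff rfl rfl]
    rw [hfw, integral_indicator_const _ (measurableSet_Icc.prod measurableSet_Icc),
      smul_eq_mul, mul_comm]
    rfl
  have hνae : ∀ᵐ w ∂ν, w.2 ∈ Icc (0:ℝ) 1 := by rw [ae_iff]; exact hνs
  have step3 : ∀ p : ℝ×ℝ, p.1 ∈ Icc (0:ℝ) 1 → p.2 ∈ Icc (0:ℝ) 1 →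
      ∫ w, f w p ∂ν = (1 - p.1) * (G 1 - G p.2) := by
    intro p hp1 hp2
    have hfmp : Measurable (fun w => f w p) := by
      have h : (fun w => f w p) = uncurry f ∘ (fun w => (w, p)) := rfl
      rw [h]; exact hFmeas.comp (measurable_id.prodMk measurable_const)
    have hintp : Integrable (fun w => f w p) ν := by
      refine Integrable.mono' (integrable_const M) hfmp.aestronglyMeasurable ?_
      filter_upwards [hνae] with w hw
      show ‖T.indicator (fun q => g q.1.2) (w, p)‖ ≤ M
      by_cases hq : ((w,p) : (ℝ×ℝ)×(ℝ×ℝ)) ∈ T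
      · rw [Set.indicator_of_mem hq]; exact hMb _ hw
      · rw [Set.indicator_of_notMem hq]; simpa using hMnn
    rw [hν] at hintp ⊢
    rw [integral_prod _ hintp]
    have hfw : ∀ u v : ℝ, f (u,v) p
        = (Ici p.1).indicator (fun _ => (1:ℝ)) u * (Ici p.2).indicator g v := by
      intro u v
      rw [hfdef]
      by_cases h1 : p.1 ≤ u <;> by_cases h2 : p.2 ≤ v <;>
        simp [Set.indicator_apply, hTdef, mem_Ici, h1, h2, hp1.1, hp2.1]
    simp_rw [hfw]
    have hIci1 : ∫ v in Icc (0:ℝ) 1, (Ici p.2).indicator g v = G 1 - G p.2 := by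
      rw [setIntegral_indicator measurableSet_Ici]
      have hseq : Icc (0:ℝ) 1 ∩ Ici p.2 = Icc p.2 1 := by
        ext x; simp only [mem_inter_iff, mem_Icc, mem_Ici]
        constructor
        · rintro ⟨⟨_, hx1⟩, hx2⟩; exact ⟨hx2, hx1⟩
        · rintro ⟨hx1, hx2⟩; exact ⟨⟨hp2.1.trans hx1, hx2⟩, hx1⟩
      rw [hseq, integral_Icc_eq_integral_Ioc, ← intervalIntegral.integral_of_le hp2.2]
      exact intervalIntegral.integral_eq_sub_of_hasDerivAt (fun x _ => hG x)
        (hg.intervalIntegrable _ _)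
    have hIci2 : ∫ u in Icc (0:ℝ) 1, (Ici p.1).indicator (fun _ => (1:ℝ)) u = 1 - p.1 := by
      rw [setIntegral_indicator measurableSet_Ici]
      have hseq : Icc (0:ℝ) 1 ∩ Ici p.1 = Icc p.1 1 := by
        ext x; simp only [mem_inter_iff, mem_Icc, mem_Ici]
        constructor
        · rintro ⟨⟨_, hx1⟩, hx2⟩; exact ⟨hx2, hx1⟩
        · rintro ⟨hx1, hx2⟩; exact ⟨⟨hp1.1.trans hx1, hx2⟩, hx1⟩
      rw [hseq, integral_Icc_eq_integral_Ioc, ← intervalIntegral.integral_of_le hp1.2,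
        intervalIntegral.integral_const]
      simp
    calc ∫ u in Icc (0:ℝ) 1, ∫ v in Icc (0:ℝ) 1,
            (Ici p.1).indicator (fun _ => (1:ℝ)) u * (Ici p.2).indicator g v
        = ∫ u in Icc (0:ℝ) 1, (Ici p.1).indicator (fun _ => (1:ℝ)) u * (G 1 - G p.2) := by
          simp_rw [integral_const_mul, hIci1]
      _ = (1 - p.1) * (G 1 - G p.2) := by
          rw [integral_mul_const, hIci2]
  have step2 : ∫ u in Icc (0:ℝ) 1, ∫ v in Icc (0:ℝ) 1,
      g v * (μ (Icc 0 u ×ˢ Icc 0 v)).toReal = ∫ p, ∫ w, f w p ∂ν ∂μ := by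
    have e1 : ∀ u v : ℝ, g v * (μ (Icc 0 u ×ˢ Icc 0 v)).toReal = ∫ p, f (u,v) p ∂μ :=
      fun u v => (step1 (u,v)).symm
    simp_rw [e1]
    rw [integral_integral (f := fun u v => ∫ p, f (u,v) p ∂μ) hInt.integral_prod_left]
    exact integral_integral_swap hInt
  rw [step2]
  refine integral_congr_ae ?_
  filter_upwards [hX, hY] with p hp1 hp2
  exact step3 p hp1 hp2


lemma ae_fst_mem (μ : Measure (ℝ × ℝ))
    (h1 : μ.map Prod.fst = volume.restrict (Icc (0:ℝ) 1)) :
    ∀ᵐ p ∂μ, p.1 ∈ Icc (0:ℝ) 1 := by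
  rw [ae_iff]
  have h : {p : ℝ×ℝ | ¬ p.1 ∈ Icc (0:ℝ) 1} = Prod.fst ⁻¹' (Icc (0:ℝ) 1)ᶜ := rfl
  rw [h, ← Measure.map_apply measurable_fst measurableSet_Icc.compl, h1,
    Measure.restrict_apply measurableSet_Icc.compl]
  simp

lemma ae_snd_mem (μ : Measure (ℝ × ℝ))
    (h2 : μ.map Prod.snd = volume.restrict (Icc (0:ℝ) 1)) :
    ∀ᵐ p ∂μ, p.2 ∈ Icc (0:ℝ) 1 := by
  rw [ae_iff]
  have h : {p : ℝ×ℝ | ¬ p.2 ∈ Icc (0:ℝ) 1} = Prod.snd ⁻¹' (Icc (0:ℝ) 1)ᶜ := rfl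
  rw [h, ← Measure.map_apply measurable_snd measurableSet_Icc.compl, h2,
    Measure.restrict_apply measurableSet_Icc.compl]
  simp

lemma copulaLMoment_eq (μ : Measure (ℝ × ℝ)) [IsProbabilityMeasure μ]
    (h1 : μ.map Prod.fst = volume.restrict (Icc (0:ℝ) 1))
    (h2 : μ.map Prod.snd = volume.restrict (Icc (0:ℝ) 1))
    (k : ℕ) (g : ℝ → ℝ) (hg : Continuous g)
    (hcont : Continuous (shiftedLegendre k))
    (hG : ∀ x, HasDerivAt (shiftedLegendre k) (g x) x)
    (h11 : shiftedLegendre k 1 = 1)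
    (hzero : ∫ x in Icc (0:ℝ) 1, shiftedLegendre k x = 0) :
    copulaLMoment μ k
      = (∫ u in Icc (0:ℝ) 1, ∫ v in Icc (0:ℝ) 1,
          g v * (μ (Icc 0 u ×ˢ Icc 0 v)).toReal) - 1/2 := by
  have hX := ae_fst_mem μ h1
  have hY := ae_snd_mem μ h2
  obtain ⟨M0, hM0⟩ := isCompact_Icc.exists_bound_of_continuousOn
    (hcont.continuousOn (s := Icc (0:ℝ) 1))
  set M : ℝ := max M0 0 with hM
  have hMnn : 0 ≤ M := le_max_right _ _
  have hMb : ∀ x ∈ Icc (0:ℝ) 1, ‖shiftedLegendre k x‖ ≤ M :=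
    fun x hx => (hM0 x hx).trans (le_max_left _ _)
  -- first moments
  have EX : ∫ p, p.1 ∂μ = 1/2 := by
    have h := integral_map (μ := μ) (φ := Prod.fst) (f := fun x : ℝ => x)
      measurable_fst.aemeasurable aestronglyMeasurable_id
    rw [h1] at h
    rw [← h, integral_Icc_eq_integral_Ioc, ← intervalIntegral.integral_of_le zero_le_one,
      integral_id]
    norm_num
  have EP : ∫ p, shiftedLegendre k p.2 ∂μ = 0 := by
    have h := integral_map (μ := μ) (φ := Prod.snd) (f := shiftedLegendre k)
      measurable_snd.aemeasurable hcont.aestronglyMeasurable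
    rw [h2] at h
    rw [← h, hzero]
  -- integrability
  have iX : Integrable (fun p : ℝ×ℝ => p.1) μ := by
    refine Integrable.mono' (integrable_const (1:ℝ)) measurable_fst.aestronglyMeasurable ?_
    filter_upwards [hX] with p hp
    rw [Real.norm_eq_abs, abs_le]
    exact ⟨by linarith [hp.1], hp.2⟩
  have iP : Integrable (fun p : ℝ×ℝ => shiftedLegendre k p.2) μ := by
    refine Integrable.mono' (integrable_const M)
      (hcont.measurable.comp measurable_snd).aestronglyMeasurable ?_
    filter_upwards [hY] with p hp
    exact hMb _ hp
  have iXP : Integrable (fun p : ℝ×ℝ => p.1 * shiftedLegendre k p.2) μ := by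
    refine Integrable.mono' (integrable_const M)
      (measurable_fst.mul (hcont.measurable.comp measurable_snd)).aestronglyMeasurable ?_
    filter_upwards [hX, hY] with p hp1 hp2
    rw [Real.norm_eq_abs, abs_mul]
    calc |p.1| * |shiftedLegendre k p.2| ≤ 1 * M := by
          refine mul_le_mul ?_ (hMb _ hp2) (abs_nonneg _) zero_le_one
          rw [abs_le]; exact ⟨by linarith [hp1.1], hp1.2⟩
      _ = M := one_mul M
  -- hoeffding-type identity
  have K := key μ h1 h2 g (shiftedLegendre k) hg hG
  simp only [h11] at K
  have expand : ∫ p, (1 - p.1) * (1 - shiftedLegendre k p.2) ∂μ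
      = 1/2 + ∫ p, p.1 * shiftedLegendre k p.2 ∂μ := by
    have hfe : (fun p : ℝ×ℝ => (1 - p.1) * (1 - shiftedLegendre k p.2))
        = fun p => ((1:ℝ) - p.1) - (shiftedLegendre k p.2 - p.1 * shiftedLegendre k p.2) := by
      funext p; ring
    have iA : Integrable (fun p : ℝ×ℝ => 1 - p.1) μ := (integrable_const 1).sub iX
    have iB : Integrable
        (fun p : ℝ×ℝ => shiftedLegendre k p.2 - p.1 * shiftedLegendre k p.2) μ := iP.sub iXP
    rw [hfe, integral_sub iA iB, integral_sub (integrable_const 1) iX,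
      integral_sub iP iXP, integral_const]
    simp only [probReal_univ, smul_eq_mul, mul_one]
    rw [EX, EP]
    ring
  rw [expand] at K
  unfold copulaLMoment
  rw [EX, EP]
  linarith [K]

/-- The first three bivariate copula L-moments of a copula measure `μ` with joint
distribution function `C` admit the representations
`δ₁ = 2∫₀¹∫₀¹ C − 1/2`, `δ₂ = 6∫₀¹∫₀¹ (2u₂−1)C − 1/2`,
`δ₃ = ∫₀¹∫₀¹ (60u₂²−60u₂+12)C − 1/2`. -/
theorem first_three_copula_Lmoments
    (μ : Measure (ℝ × ℝ)) [IsProbabilityMeasure μ]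
    (h1 : μ.map Prod.fst = volume.restrict (Icc (0:ℝ) 1))
    (h2 : μ.map Prod.snd = volume.restrict (Icc (0:ℝ) 1))
    (C : ℝ → ℝ → ℝ)
    (hC : ∀ u v : ℝ, C u v = (μ (Icc 0 u ×ˢ Icc 0 v)).toReal) :
    copulaLMoment μ 1
        = 2 * (∫ u in (0:ℝ)..1, ∫ v in (0:ℝ)..1, C u v) - 1/2 ∧
    copulaLMoment μ 2
        = 6 * (∫ u in (0:ℝ)..1, ∫ v in (0:ℝ)..1, (2*v - 1) * C u v) - 1/2 ∧
    copulaLMoment μ 3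
        = (∫ u in (0:ℝ)..1, ∫ v in (0:ℝ)..1, (60*v^2 - 60*v + 12) * C u v) - 1/2 := by
  refine ⟨?_, ?_, ?_⟩
  · -- k = 1
    have e := copulaLMoment_eq μ h1 h2 1 (fun _ => (2:ℝ)) continuous_const
      (by rw [sl1]; fun_prop)
      (fun x => by
        rw [sl1]
        have h := ((hasDerivAt_id x).const_mul (2:ℝ)).sub_const (1:ℝ)
        exact h.congr_deriv (by ring))
      (by rw [sl1]; norm_num)
      (by
        rw [sl1, integral_Icc_eq_integral_Ioc, ← intervalIntegral.integral_of_le zero_le_one,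
          intervalIntegral.integral_eq_sub_of_hasDerivAt
            (f := fun x : ℝ => x^2 - x) (f' := fun u => 2*u - 1)
            (fun x _ => by
              have h := (hasDerivAt_pow 2 x).sub (hasDerivAt_id x)
              convert h using 1; (funext y; simp only [Pi.add_apply, Pi.sub_apply, id_eq]); push_cast; ring)
            ((by fun_prop : Continuous fun u : ℝ => 2*u - 1).intervalIntegrable _ _)]
        norm_num)
    rw [e]
    simp_rw [hC, intervalIntegral.integral_of_le (zero_le_one (α := ℝ)),
      integral_Icc_eq_integral_Ioc, integral_const_mul]
  · -- k = 2
    have e := copulaLMoment_eq μ h1 h2 2 (fun v => 6*(2*v - 1)) (by fun_prop)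
      (by rw [sl2]; fun_prop)
      (fun x => by
        rw [sl2]
        have h := (((hasDerivAt_pow 2 x).const_mul (6:ℝ)).sub
          ((hasDerivAt_id x).const_mul (6:ℝ))).add_const (1:ℝ)
        exact h.congr_deriv (by push_cast; ring))
      (by rw [sl2]; norm_num)
      (by
        rw [sl2, integral_Icc_eq_integral_Ioc, ← intervalIntegral.integral_of_le zero_le_one,
          intervalIntegral.integral_eq_sub_of_hasDerivAt
            (f := fun x : ℝ => 2*x^3 - 3*x^2 + x) (f' := fun u => 6*u^2 - 6*u + 1)
            (fun x _ => by
              have h := (((hasDerivAt_pow 3 x).const_mul (2:ℝ)).sub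
                ((hasDerivAt_pow 2 x).const_mul (3:ℝ))).add (hasDerivAt_id x)
              convert h using 1; (funext y; simp only [Pi.add_apply, Pi.sub_apply, id_eq]); push_cast; ring)
            ((by fun_prop : Continuous fun u : ℝ => 6*u^2 - 6*u + 1).intervalIntegrable _ _)]
        norm_num)
    rw [e]
    simp_rw [hC, intervalIntegral.integral_of_le (zero_le_one (α := ℝ)),
      integral_Icc_eq_integral_Ioc, mul_assoc, integral_const_mul]
  · -- k = 3
    have e := copulaLMoment_eq μ h1 h2 3 (fun v => 60*v^2 - 60*v + 12) (by fun_prop)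
      (by rw [sl3]; fun_prop)
      (fun x => by
        rw [sl3]
        have h := ((((hasDerivAt_pow 3 x).const_mul (20:ℝ)).sub
          ((hasDerivAt_pow 2 x).const_mul (30:ℝ))).add
          ((hasDerivAt_id x).const_mul (12:ℝ))).sub_const (1:ℝ)
        exact h.congr_deriv (by push_cast; ring))
      (by rw [sl3]; norm_num)
      (by
        rw [sl3, integral_Icc_eq_integral_Ioc, ← intervalIntegral.integral_of_le zero_le_one,
          intervalIntegral.integral_eq_sub_of_hasDerivAt
            (f := fun x : ℝ => 5*x^4 - 10*x^3 + 6*x^2 - x)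
            (f' := fun u => 20*u^3 - 30*u^2 + 12*u - 1)
            (fun x _ => by
              have h := ((((hasDerivAt_pow 4 x).const_mul (5:ℝ)).sub
                ((hasDerivAt_pow 3 x).const_mul (10:ℝ))).add
                ((hasDerivAt_pow 2 x).const_mul (6:ℝ))).sub (hasDerivAt_id x)
              convert h using 1; (funext y; simp only [Pi.add_apply, Pi.sub_apply, id_eq]); push_cast; ring)
            ((by fun_prop :
              Continuous fun u : ℝ => 20*u^3 - 30*u^2 + 12*u - 1).intervalIntegrable _ _)]
        norm_num)
    rw [e]
    simp_rw [hC, intervalIntegral.integral_of_le (zero_le_one (α := ℝ)),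
      integral_Icc_eq_integral_Ioc]
end

section
/- Let μ be a probability measure on [0,1]² with uniform marginals and joint distribution function C, and let (U₁,U₂) have law μ. Then for every integer ℓ ≥ 1, Cov(U₁, U₂^ℓ) = ℓ ∫₀¹∫₀¹ (C(u,v) − u v) v^{ℓ−1} dv du. -/
open MeasureTheory Set

set_option linter.unusedSectionVars false
open MeasureTheory Set

section Aux
variable {μ : Measure (ℝ × ℝ)} [IsProbabilityMeasure μ] {f : ℝ × ℝ → ℝ}

lemma marg_apply (hf : Measurable f) (h : μ.map f = volume.restrict (Icc (0:ℝ) 1))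
    {s : Set ℝ} (hs : MeasurableSet s) :
    μ (f ⁻¹' s) = volume (s ∩ Icc (0:ℝ) 1) := by
  rw [← Measure.map_apply hf hs, h, Measure.restrict_apply hs]

lemma marg_lt (hf : Measurable f) (h : μ.map f = volume.restrict (Icc (0:ℝ) 1))
    {u : ℝ} (hu : u ∈ Icc (0:ℝ) 1) :
    μ {p | f p < u} = ENNReal.ofReal u := by
  have : {p | f p < u} = f ⁻¹' (Iio u) := rfl
  rw [this, marg_apply hf h measurableSet_Iio]
  have : Iio u ∩ Icc (0:ℝ) 1 = Ico 0 u := by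
    ext x
    simp only [mem_inter_iff, mem_Iio, mem_Icc, mem_Ico]
    constructor
    · rintro ⟨h1, h2, h3⟩; exact ⟨h2, h1⟩
    · rintro ⟨h1, h2⟩; exact ⟨h2, h1, le_trans h2.le hu.2⟩
  rw [this, Real.volume_Ico, sub_zero]

lemma marg_singleton (hf : Measurable f) (h : μ.map f = volume.restrict (Icc (0:ℝ) 1))
    (u : ℝ) : μ {p | f p = u} = 0 := by
  have : {p | f p = u} = f ⁻¹' {u} := rfl
  rw [this, marg_apply hf h (measurableSet_singleton u)]
  exact measure_mono_null inter_subset_left (Real.volume_singleton)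

lemma marg_ae (hf : Measurable f) (h : μ.map f = volume.restrict (Icc (0:ℝ) 1)) :
    ∀ᵐ p ∂μ, f p ∈ Icc (0:ℝ) 1 := by
  rw [ae_iff]
  have h2 : {p | ¬ f p ∈ Icc (0:ℝ) 1} = f ⁻¹' (Icc (0:ℝ) 1)ᶜ := rfl
  rw [h2, marg_apply hf h measurableSet_Icc.compl, compl_inter_self]; exact measure_empty

lemma surv_eq (h1 : μ.map Prod.fst = volume.restrict (Icc (0:ℝ) 1))
    (h2 : μ.map Prod.snd = volume.restrict (Icc (0:ℝ) 1))
    (C : ℝ → ℝ → ℝ)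
    (hC : ∀ u v : ℝ, C u v = (μ (Icc 0 u ×ˢ Icc 0 v)).toReal)
    {u v : ℝ} (hu : u ∈ Icc (0:ℝ) 1) (hv : v ∈ Icc (0:ℝ) 1) :
    (μ {p : ℝ × ℝ | u ≤ p.1 ∧ v ≤ p.2}).toReal = 1 - u - v + C u v := by
  set A : Set (ℝ × ℝ) := {p | p.1 < u} with hA
  set B : Set (ℝ × ℝ) := {p | p.2 < v} with hB
  have hAm : MeasurableSet A := measurableSet_lt measurable_fst measurable_const
  have hBm : MeasurableSet B := measurableSet_lt measurable_snd measurable_const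
  -- inclusion-exclusion
  have hincl : (μ (A ∪ B)).toReal + (μ (A ∩ B)).toReal = u + v := by
    have h := measure_union_add_inter (μ := μ) A hBm
    rw [hA, hB, marg_lt measurable_fst h1 hu, marg_lt measurable_snd h2 hv] at h
    have := congrArg ENNReal.toReal h
    rw [ENNReal.toReal_add (measure_ne_top μ _) (measure_ne_top μ _),
      ENNReal.toReal_add ENNReal.ofReal_ne_top ENNReal.ofReal_ne_top,
      ENNReal.toReal_ofReal hu.1, ENNReal.toReal_ofReal hv.1] at this
    exact this
  -- A ∩ B has the measure of the rectangle
  have hAB : μ (A ∩ B) = μ (Icc 0 u ×ˢ Icc 0 v) := by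
    apply measure_congr
    rw [ae_eq_set]
    constructor
    · refine measure_mono_null (t := {p : ℝ × ℝ | p.1 < 0} ∪ {p : ℝ × ℝ | p.2 < 0}) ?_ ?_
      · rintro ⟨x, y⟩ ⟨⟨hx, hy⟩, hne⟩
        simp only [mem_union, mem_setOf_eq]
        by_contra hcon
        push_neg at hcon
        exact hne ⟨⟨hcon.1, hx.le⟩, ⟨hcon.2, hy.le⟩⟩
      · refine measure_union_null ?_ ?_
        · have h0 : (0:ℝ) ∈ Icc (0:ℝ) 1 := by constructor <;> norm_num
          rw [show {p : ℝ × ℝ | p.1 < 0} = {p : ℝ × ℝ | p.1 < (0:ℝ)} from rfl,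
            marg_lt measurable_fst h1 h0]
          simp
        · have h0 : (0:ℝ) ∈ Icc (0:ℝ) 1 := by constructor <;> norm_num
          rw [marg_lt measurable_snd h2 h0]; simp
    · refine measure_mono_null (t := {p : ℝ × ℝ | p.1 = u} ∪ {p : ℝ × ℝ | p.2 = v}) ?_ ?_
      · rintro ⟨x, y⟩ ⟨hmem, hne⟩
        simp only [mem_prod, mem_Icc] at hmem
        simp only [mem_inter_iff, mem_setOf_eq, hA, hB, not_and_or, not_lt] at hne
        rcases hne with h | h
        · exact Or.inl (le_antisymm hmem.1.2 h)
        · exact Or.inr (le_antisymm hmem.2.2 h)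
      · exact measure_union_null (marg_singleton measurable_fst h1 u)
          (marg_singleton measurable_snd h2 v)
  -- complement
  have hcompl : {p : ℝ × ℝ | u ≤ p.1 ∧ v ≤ p.2} = (A ∪ B)ᶜ := by
    ext p; simp [hA, hB, not_or, not_lt]
  have hunion_le : μ (A ∪ B) ≤ 1 := prob_le_one
  have hfin : (μ (A ∪ B)) ≠ ⊤ := measure_ne_top μ _
  rw [hcompl, prob_compl_eq_one_sub (hAm.union hBm),
    ENNReal.toReal_sub_of_le hunion_le ENNReal.one_ne_top, ENNReal.toReal_one]
  rw [hC u v, ← hAB]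
  linarith [hincl]

end Aux

lemma pow_int_aux (l : ℕ) (hl : 1 ≤ l) (x : ℝ) :
    ∫ v in (0:ℝ)..x, (l:ℝ) * v ^ (l-1) = x ^ l := by
  have hl0 : (l:ℝ) ≠ 0 := Nat.cast_ne_zero.mpr (by omega)
  have h : l - 1 + 1 = l := Nat.sub_add_cancel hl
  have hc : ((l - 1 : ℕ) : ℝ) + 1 = (l : ℝ) := by exact_mod_cast congrArg (Nat.cast (R := ℝ)) h
  rw [intervalIntegral.integral_const_mul, integral_pow, h, hc, zero_pow (by omega), sub_zero]
  field_simp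

lemma nu1_prob : IsProbabilityMeasure (volume.restrict (Icc (0:ℝ) 1)) := by
  constructor
  rw [Measure.restrict_apply MeasurableSet.univ, univ_inter, Real.volume_Icc]
  norm_num

-- indicator integral over the restricted measure equals interval integral
lemma ind_int_aux (f : ℝ → ℝ) {c : ℝ} (hc : c ∈ Icc (0:ℝ) 1) :
    ∫ v, (Iic c).indicator f v ∂(volume.restrict (Icc (0:ℝ) 1)) = ∫ v in (0:ℝ)..c, f v := by
  rw [integral_indicator measurableSet_Iic, Measure.restrict_restrict measurableSet_Iic]
  have hs : Iic c ∩ Icc (0:ℝ) 1 = Icc 0 c := by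
    ext x
    simp only [mem_inter_iff, mem_Iic, mem_Icc]
    exact ⟨fun ⟨a, b, _⟩ => ⟨b, a⟩, fun ⟨a, b⟩ => ⟨b, a, le_trans b hc.2⟩⟩
  rw [hs, ← Measure.restrict_congr_set Ioc_ae_eq_Icc,
    intervalIntegral.integral_of_le hc.1]

section Main
variable {μ : Measure (ℝ × ℝ)} [IsProbabilityMeasure μ]

lemma intA_aux (l : ℕ) (hl : 1 ≤ l) {p : ℝ × ℝ}
    (hp1 : p.1 ∈ Icc (0:ℝ) 1) (hp2 : p.2 ∈ Icc (0:ℝ) 1) :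
    ∫ q : ℝ × ℝ, (if q.1 ≤ p.1 ∧ q.2 ≤ p.2 then (l:ℝ) * q.2 ^ (l-1) else 0)
      ∂((volume.restrict (Icc (0:ℝ) 1)).prod (volume.restrict (Icc (0:ℝ) 1)))
      = p.1 * p.2 ^ l := by
  have hpt : ∀ q : ℝ × ℝ, (if q.1 ≤ p.1 ∧ q.2 ≤ p.2 then (l:ℝ) * q.2 ^ (l-1) else 0)
      = ((Iic p.1).indicator (fun _ => (1:ℝ)) q.1) *
        ((Iic p.2).indicator (fun y => (l:ℝ) * y ^ (l-1)) q.2) := by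
    intro q
    by_cases h1 : q.1 ≤ p.1 <;> by_cases h2 : q.2 ≤ p.2 <;>
      simp [indicator, h1, h2]
  simp_rw [hpt]
  rw [MeasureTheory.integral_prod_mul]
  have hfst : ∫ x, (Iic p.1).indicator (fun _ => (1:ℝ)) x
      ∂(volume.restrict (Icc (0:ℝ) 1)) = p.1 := by
    rw [integral_indicator_const (1:ℝ) measurableSet_Iic, smul_eq_mul, mul_one,
      measureReal_def, Measure.restrict_apply measurableSet_Iic]
    have hs : Iic p.1 ∩ Icc (0:ℝ) 1 = Icc 0 p.1 := by
      ext x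
      simp only [mem_inter_iff, mem_Iic, mem_Icc]
      exact ⟨fun ⟨a, b, _⟩ => ⟨b, a⟩, fun ⟨a, b⟩ => ⟨b, a, le_trans b hp1.2⟩⟩
    rw [hs, Real.volume_Icc, sub_zero, ENNReal.toReal_ofReal hp1.1]
  rw [hfst, ind_int_aux _ hp2, pow_int_aux l hl]

lemma intB_aux (l : ℕ) (q : ℝ × ℝ) :
    ∫ p : ℝ × ℝ, (if q.1 ≤ p.1 ∧ q.2 ≤ p.2 then (l:ℝ) * q.2 ^ (l-1) else 0) ∂μ
      = (l:ℝ) * q.2 ^ (l-1) * (μ {p : ℝ × ℝ | q.1 ≤ p.1 ∧ q.2 ≤ p.2}).toReal := by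
  have hD : MeasurableSet {p : ℝ × ℝ | q.1 ≤ p.1 ∧ q.2 ≤ p.2} :=
    (measurableSet_le measurable_const measurable_fst).inter
      (measurableSet_le measurable_const measurable_snd)
  have hpt : ∀ p : ℝ × ℝ, (if q.1 ≤ p.1 ∧ q.2 ≤ p.2 then (l:ℝ) * q.2 ^ (l-1) else 0)
      = ({p : ℝ × ℝ | q.1 ≤ p.1 ∧ q.2 ≤ p.2}).indicator (fun _ => (l:ℝ) * q.2 ^ (l-1)) p := by
    intro p
    by_cases h : q.1 ≤ p.1 ∧ q.2 ≤ p.2 <;> simp [indicator, h, mem_setOf_eq]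
  simp_rw [hpt]
  rw [integral_indicator_const _ hD, smul_eq_mul, measureReal_def]
  ring

lemma Fint_aux (l : ℕ) :
    Integrable (Function.uncurry (fun (p q : ℝ × ℝ) =>
      if q.1 ≤ p.1 ∧ q.2 ≤ p.2 then (l:ℝ) * q.2 ^ (l-1) else 0))
      (μ.prod ((volume.restrict (Icc (0:ℝ) 1)).prod (volume.restrict (Icc (0:ℝ) 1)))) := by
  haveI : IsProbabilityMeasure (volume.restrict (Icc (0:ℝ) 1)) := nu1_prob
  set ν := (volume.restrict (Icc (0:ℝ) 1)).prod (volume.restrict (Icc (0:ℝ) 1)) with hν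
  have hE : MeasurableSet {z : (ℝ × ℝ) × (ℝ × ℝ) | z.2.1 ≤ z.1.1 ∧ z.2.2 ≤ z.1.2} :=
    (measurableSet_le (measurable_snd.fst) (measurable_fst.fst)).inter
      (measurableSet_le (measurable_snd.snd) (measurable_fst.snd))
  have hmeas : Measurable (Function.uncurry (fun (p q : ℝ × ℝ) =>
      if q.1 ≤ p.1 ∧ q.2 ≤ p.2 then (l:ℝ) * q.2 ^ (l-1) else 0)) := by
    have : Function.uncurry (fun (p q : ℝ × ℝ) =>
        if q.1 ≤ p.1 ∧ q.2 ≤ p.2 then (l:ℝ) * q.2 ^ (l-1) else 0)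
        = fun z : (ℝ × ℝ) × (ℝ × ℝ) =>
          ({z : (ℝ × ℝ) × (ℝ × ℝ) | z.2.1 ≤ z.1.1 ∧ z.2.2 ≤ z.1.2}).indicator
            (fun z => (l:ℝ) * z.2.2 ^ (l-1)) z := by
      funext z
      by_cases h : z.2.1 ≤ z.1.1 ∧ z.2.2 ≤ z.1.2 <;>
        simp [Function.uncurry, indicator, h, mem_setOf_eq]
    rw [this]
    exact (measurable_const.mul ((measurable_snd.snd).pow_const _)).indicator hE
  have hae : ∀ᵐ z : (ℝ × ℝ) × (ℝ × ℝ) ∂(μ.prod ν), z.2.2 ∈ Icc (0:ℝ) 1 := by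
    rw [ae_iff]
    have hset : {z : (ℝ × ℝ) × (ℝ × ℝ) | ¬ z.2.2 ∈ Icc (0:ℝ) 1}
        = (univ : Set (ℝ × ℝ)) ×ˢ ((univ : Set ℝ) ×ˢ (Icc (0:ℝ) 1)ᶜ) := by
      ext z; simp [mem_prod]
    have hν0 : (volume.restrict (Icc (0:ℝ) 1)) ((Icc (0:ℝ) 1)ᶜ) = 0 := by
      rw [Measure.restrict_apply measurableSet_Icc.compl, compl_inter_self]
      exact measure_empty
    rw [hset, Measure.prod_prod, Measure.prod_prod, hν0, mul_zero, mul_zero]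
  apply MeasureTheory.Integrable.mono' (integrable_const ((l:ℝ))) hmeas.aestronglyMeasurable
  filter_upwards [hae] with z hz
  show ‖(if z.2.1 ≤ z.1.1 ∧ z.2.2 ≤ z.1.2 then (l:ℝ) * z.2.2 ^ (l-1) else 0)‖ ≤ (l:ℝ)
  by_cases h : z.2.1 ≤ z.1.1 ∧ z.2.2 ≤ z.1.2
  · rw [if_pos h, Real.norm_eq_abs, abs_mul, Nat.abs_cast, abs_pow]
    have h1 : |z.2.2| ≤ 1 := abs_le.mpr ⟨by linarith [hz.1], hz.2⟩
    have h2 : |z.2.2| ^ (l-1) ≤ 1 := pow_le_one₀ (abs_nonneg _) h1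
    nlinarith [Nat.cast_nonneg (α := ℝ) l]
  · rw [if_neg h, norm_zero]
    positivity

end Main


/-- If `μ` is a probability measure on `[0,1]²` with uniform marginals, joint df
(copula) `C`, and `(U₁,U₂) ~ μ`, then for every integer `ℓ ≥ 1`,
`Cov(U₁, U₂^ℓ) = ℓ ∫₀¹∫₀¹ (C(u,v) − u v) v^{ℓ−1} dv du`. -/
theorem cov_pow_copula_representation
    (μ : Measure (ℝ × ℝ)) [IsProbabilityMeasure μ]
    (h1 : μ.map Prod.fst = volume.restrict (Icc (0:ℝ) 1))
    (h2 : μ.map Prod.snd = volume.restrict (Icc (0:ℝ) 1))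
    (C : ℝ → ℝ → ℝ)
    (hC : ∀ u v : ℝ, C u v = (μ (Icc 0 u ×ˢ Icc 0 v)).toReal)
    (l : ℕ) (hl : 1 ≤ l) :
    (∫ p, p.1 * p.2 ^ l ∂μ) - (∫ p, p.1 ∂μ) * (∫ p, p.2 ^ l ∂μ)
      = (l : ℝ) * ∫ u in (0:ℝ)..1, ∫ v in (0:ℝ)..1,
          (C u v - u * v) * v ^ (l - 1) := by
  classical
  haveI : IsProbabilityMeasure (volume.restrict (Icc (0:ℝ) 1)) := nu1_prob
  set ν1 : Measure ℝ := volume.restrict (Icc (0:ℝ) 1) with hν1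
  set ν : Measure (ℝ × ℝ) := ν1.prod ν1 with hν
  have hl0 : (l:ℝ) ≠ 0 := Nat.cast_ne_zero.mpr (by omega)
  have hlp : (l:ℝ) + 1 ≠ 0 := by positivity
  set F : (ℝ × ℝ) → (ℝ × ℝ) → ℝ :=
    fun p q => if q.1 ≤ p.1 ∧ q.2 ≤ p.2 then (l:ℝ) * q.2 ^ (l-1) else 0 with hFdef
  have hconv : ∀ f : ℝ → ℝ, ∫ x, f x ∂ν1 = ∫ x in (0:ℝ)..1, f x := by
    intro f
    rw [hν1, ← Measure.restrict_congr_set Ioc_ae_eq_Icc]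
    exact (intervalIntegral.integral_of_le zero_le_one).symm
  have hFint : Integrable (Function.uncurry F) (μ.prod ν) := Fint_aux l
  have hswap := MeasureTheory.integral_integral_swap hFint
  have hleft : ∫ p, ∫ q, F p q ∂ν ∂μ = ∫ p, p.1 * p.2 ^ l ∂μ := by
    apply integral_congr_ae
    filter_upwards [marg_ae measurable_fst h1, marg_ae measurable_snd h2] with p hp1 hp2
    exact intA_aux l hl hp1 hp2
  set g : ℝ × ℝ → ℝ := fun q => ∫ p, F p q ∂μ with hgdef
  have hgq : ∀ a b : ℝ, g (a, b)
      = (l:ℝ) * b ^ (l-1) * (μ {p : ℝ × ℝ | a ≤ p.1 ∧ b ≤ p.2}).toReal :=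
    fun a b => intB_aux l (a, b)
  have hgint : Integrable g ν := (hFint.swap).integral_prod_left
  have hsplit : ∫ q, g q ∂ν = ∫ u, ∫ v, g (u, v) ∂ν1 ∂ν1 :=
    MeasureTheory.integral_prod g hgint
  have hGint : Integrable (fun u => ∫ v, g (u, v) ∂ν1) ν1 := hgint.integral_prod_left
  have hsec : ∀ᵐ u ∂ν1, Integrable (fun v => g (u, v)) ν1 := hgint.prod_right_ae
  have haeu : ∀ᵐ u ∂ν1, u ∈ Icc (0:ℝ) 1 := ae_restrict_mem measurableSet_Icc
  set R : ℝ → ℝ := fun u => ∫ v in (0:ℝ)..1, (C u v - u * v) * v ^ (l-1) with hR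
  have hinner : ∀ᵐ u ∂ν1, ∫ v, g (u, v) ∂ν1
      = (l:ℝ) * R u + (1 - u) / ((l:ℝ) + 1) := by
    filter_upwards [hsec, haeu] with u hu hui
    set Bf : ℝ → ℝ := fun v => (l:ℝ) * v ^ (l-1) * ((1 - u) * (1 - v)) with hBf
    have hBc : Continuous Bf := by fun_prop
    have hBint : Integrable Bf ν1 := hBc.integrableOn_Icc
    have hAint : Integrable (fun v => g (u, v) - Bf v) ν1 := hu.sub hBint
    have hdecomp : ∫ v, g (u, v) ∂ν1
        = (∫ v, (g (u, v) - Bf v) ∂ν1) + ∫ v, Bf v ∂ν1 := by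
      rw [← integral_add hAint hBint]
      simp
    have hIA : ∫ v, (g (u, v) - Bf v) ∂ν1 = (l:ℝ) * R u := by
      rw [hconv, hR]
      rw [← intervalIntegral.integral_const_mul]
      apply intervalIntegral.integral_congr
      intro v hv
      rw [uIcc_of_le zero_le_one] at hv
      have hs := surv_eq h1 h2 C hC hui hv
      simp only [hBf]
      rw [hgq u v, hs]
      ring
    have hIB : ∫ v, Bf v ∂ν1 = (1 - u) / ((l:ℝ) + 1) := by
      rw [hconv]
      have heq : EqOn Bf (fun v => (1 - u) * ((l:ℝ) * v ^ (l-1) - (l:ℝ) * v ^ l))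
          (uIcc (0:ℝ) 1) := by
        intro v _
        have hvp : v ^ (l-1) * v = v ^ l := pow_sub_one_mul (by omega) v
        simp only [hBf]
        rw [← hvp]
        ring
      rw [intervalIntegral.integral_congr heq, intervalIntegral.integral_const_mul]
      have h1int : IntervalIntegrable (fun v : ℝ => (l:ℝ) * v ^ (l-1)) volume 0 1 :=
        (continuous_const.mul (continuous_pow _)).intervalIntegrable 0 1
      have h2int : IntervalIntegrable (fun v : ℝ => (l:ℝ) * v ^ l) volume 0 1 :=
        (continuous_const.mul (continuous_pow _)).intervalIntegrable 0 1
      rw [intervalIntegral.integral_sub h1int h2int, pow_int_aux l hl, one_pow,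
        intervalIntegral.integral_const_mul, integral_pow, one_pow,
        zero_pow (by omega : l + 1 ≠ 0), sub_zero]
      field_simp
      ring
    rw [hdecomp, hIA, hIB]
  have hYint : Integrable (fun u : ℝ => (1 - u) / ((l:ℝ) + 1)) ν1 :=
    Continuous.integrableOn_Icc (by fun_prop)
  have hXint : Integrable (fun u => (l:ℝ) * R u) ν1 := by
    apply Integrable.congr (hGint.sub hYint)
    filter_upwards [hinner] with u h
    simp only [Pi.sub_apply]
    rw [h]
    ring
  have houter : ∫ u, ∫ v, g (u, v) ∂ν1 ∂ν1
      = (l:ℝ) * (∫ u in (0:ℝ)..1, R u) + (1 / 2) / ((l:ℝ) + 1) := by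
    calc ∫ u, ∫ v, g (u, v) ∂ν1 ∂ν1
        = ∫ u, ((l:ℝ) * R u + (1 - u) / ((l:ℝ) + 1)) ∂ν1 := integral_congr_ae hinner
      _ = (∫ u, (l:ℝ) * R u ∂ν1) + ∫ u, (1 - u) / ((l:ℝ) + 1) ∂ν1 :=
          integral_add hXint hYint
      _ = (l:ℝ) * (∫ u in (0:ℝ)..1, R u) + (1 / 2) / ((l:ℝ) + 1) := by
          rw [hconv, hconv, intervalIntegral.integral_const_mul]
          congr 1
          rw [intervalIntegral.integral_div]
          congr 1
          rw [intervalIntegral.integral_sub intervalIntegrable_const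
            (continuous_id'.intervalIntegrable 0 1), integral_id,
            intervalIntegral.integral_const]
          norm_num
  have hcollect : ∫ q, g q ∂ν = ∫ q, ∫ p, F p q ∂μ ∂ν := rfl
  have htotal : ∫ p, p.1 * p.2 ^ l ∂μ
      = (l:ℝ) * (∫ u in (0:ℝ)..1, R u) + (1 / 2) / ((l:ℝ) + 1) := by
    rw [← hleft, hswap, ← hcollect, hsplit, houter]
  have hm1 : ∫ p, p.1 ∂μ = 1 / 2 := by
    have h : ∫ x, x ∂(μ.map Prod.fst) = ∫ p : ℝ × ℝ, p.1 ∂μ :=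
      integral_map measurable_fst.aemeasurable aestronglyMeasurable_id
    rw [h1, hconv] at h
    rw [← h, integral_id]
    norm_num
  have hm2 : ∫ p, p.2 ^ l ∂μ = 1 / ((l:ℝ) + 1) := by
    have h : ∫ x, x ^ l ∂(μ.map Prod.snd) = ∫ p : ℝ × ℝ, p.2 ^ l ∂μ :=
      integral_map measurable_snd.aemeasurable
        ((measurable_id.pow_const l).aestronglyMeasurable)
    rw [h2, hconv] at h
    rw [← h, integral_pow, one_pow, zero_pow (by omega : l + 1 ≠ 0), sub_zero]
  rw [htotal, hm1, hm2]
  ring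
end

section
/- For the one-iterated FGM copula C_{α₁,α₂}(u,v) = uv(1 + α₁(1−u)(1−v) + α₂ uv(1−u)(1−v)), the first two bivariate copula L-moments are δ₁ = 2∫₀¹∫₀¹ (C_{α₁,α₂}(u,v) − uv) du dv = α₁/18 + α₂/72 and δ₂ = ∫₀¹∫₀¹ (C_{α₁,α₂}(u,v) − uv)(12v − 6) dv du = α₂/120. -/
open MeasureTheory

/-- The one-iterated FGM copula
`C_{α₁,α₂}(u,v) = uv(1 + α₁(1−u)(1−v) + α₂ uv(1−u)(1−v))`. -/
noncomputable def iteratedFGM (α₁ α₂ u v : ℝ) : ℝ :=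
  u * v * (1 + α₁ * (1 - u) * (1 - v) + α₂ * u * v * (1 - u) * (1 - v))

lemma int4 (a b c d : ℝ) :
    ∫ x in (0:ℝ)..1, (a*x + b*x^2 + c*x^3 + d*x^4) = a/2 + b/3 + c/4 + d/5 := by
  have h : ∀ x ∈ Set.uIcc (0:ℝ) 1,
      HasDerivAt (fun x : ℝ => a*x^2/2 + b*x^3/3 + c*x^4/4 + d*x^5/5)
        (a*x + b*x^2 + c*x^3 + d*x^4) x := by
    intro x _
    have h1 := (((((hasDerivAt_pow 2 x).const_mul a).div_const 2).add
        (((hasDerivAt_pow 3 x).const_mul b).div_const 3)).add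
        (((hasDerivAt_pow 4 x).const_mul c).div_const 4)).add
        (((hasDerivAt_pow 5 x).const_mul d).div_const 5)
    refine h1.congr_deriv ?_
    push_cast
    ring
  rw [intervalIntegral.integral_eq_sub_of_hasDerivAt h
    (Continuous.intervalIntegrable (by continuity) _ _)]
  norm_num

/-- For the one-iterated FGM copula, the first two bivariate copula L-moments are
`δ₁ = 2∫₀¹∫₀¹ (C − uv) du dv = α₁/18 + α₂/72` and
`δ₂ = ∫₀¹∫₀¹ (C − uv)(12v − 6) dv du = α₂/120`. -/
theorem iteratedFGM_first_two_copula_Lmoments (α₁ α₂ : ℝ) :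
    (2 * (∫ u in (0:ℝ)..1, ∫ v in (0:ℝ)..1, (iteratedFGM α₁ α₂ u v - u * v))
        = α₁ / 18 + α₂ / 72) ∧
    ((∫ u in (0:ℝ)..1, ∫ v in (0:ℝ)..1,
          (iteratedFGM α₁ α₂ u v - u * v) * (12 * v - 6))
        = α₂ / 120) := by
  have h1 : ∀ u : ℝ, (∫ v in (0:ℝ)..1, (iteratedFGM α₁ α₂ u v - u * v))
      = (α₁/6)*u + (α₂/12 - α₁/6)*u^2 + (-(α₂/12))*u^3 + 0*u^4 := by
    intro u
    have : (∫ v in (0:ℝ)..1, (iteratedFGM α₁ α₂ u v - u * v))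
        = ∫ v in (0:ℝ)..1, ((α₁*u*(1-u))*v + (α₂*u^2*(1-u) - α₁*u*(1-u))*v^2
            + (-(α₂*u^2*(1-u)))*v^3 + 0*v^4) := by
      apply intervalIntegral.integral_congr
      intro v _
      simp only [iteratedFGM]
      ring
    rw [this, int4]
    ring
  have h2 : ∀ u : ℝ, (∫ v in (0:ℝ)..1, (iteratedFGM α₁ α₂ u v - u * v) * (12 * v - 6))
      = 0*u + (α₂/10)*u^2 + (-(α₂/10))*u^3 + 0*u^4 := by
    intro u
    have : (∫ v in (0:ℝ)..1, (iteratedFGM α₁ α₂ u v - u * v) * (12 * v - 6))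
        = ∫ v in (0:ℝ)..1, ((-6*(α₁*u*(1-u)))*v
            + (18*α₁*u*(1-u) - 6*α₂*u^2*(1-u))*v^2
            + (18*α₂*u^2*(1-u) - 12*α₁*u*(1-u))*v^3
            + (-12*α₂*u^2*(1-u))*v^4) := by
      apply intervalIntegral.integral_congr
      intro v _
      simp only [iteratedFGM]
      ring
    rw [this, int4]
    ring
  constructor
  · simp_rw [h1]
    rw [int4]
    ring
  · simp_rw [h2]
    rw [int4]
    ring
end

section
/- For the two-iterated FGM copula C_{α₁,α₂,α₃}(u,v) = uv(1 + α₁(1−u)(1−v) + α₂ uv(1−u)(1−v) + α₃ uv(1−u)²(1−v)²), the first three bivariate copula L-moments are: δ₁ = 2∫₀¹∫₀¹ (C_{α₁,α₂,α₃}(u,v) − uv) du dv = α₁/18 + α₂/72 + α₃/450; δ₂ = ∫₀¹∫₀¹ (C_{α₁,α₂,α₃}(u,v) − uv)(12v − 6) dv du = α₂/120; δ₃ = ∫₀¹∫₀¹ (C_{α₁,α₂,α₃}(u,v) − uv)(60v² − 60v + 12) dv du = −α₃/1050. -/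
open MeasureTheory

/-- The two-iterated FGM copula
`C(u,v) = uv(1 + α₁(1−u)(1−v) + α₂ uv(1−u)(1−v) + α₃ uv(1−u)²(1−v)²)`. -/
noncomputable def twoIteratedFGM (α₁ α₂ α₃ u v : ℝ) : ℝ :=
  u * v * (1 + α₁ * (1 - u) * (1 - v) + α₂ * u * v * (1 - u) * (1 - v)
    + α₃ * u * v * (1 - u) ^ 2 * (1 - v) ^ 2)

lemma ipoly (a0 a1 a2 a3 a4 a5 a6 : ℝ) :
    (∫ x in (0:ℝ)..1, (a0 + a1*x + a2*x^2 + a3*x^3 + a4*x^4 + a5*x^5 + a6*x^6))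
      = a0 + a1/2 + a2/3 + a3/4 + a4/5 + a5/6 + a6/7 := by
  have h : ∀ x ∈ Set.uIcc (0:ℝ) 1,
      HasDerivAt (fun x : ℝ => a0*x^1 + a1/2*x^2 + a2/3*x^3 + a3/4*x^4
        + a4/5*x^5 + a5/6*x^6 + a6/7*x^7)
        (a0 + a1*x + a2*x^2 + a3*x^3 + a4*x^4 + a5*x^5 + a6*x^6) x := by
    intro x _
    have := (((((((hasDerivAt_pow 1 x).const_mul a0).add
      ((hasDerivAt_pow 2 x).const_mul (a1/2))).add
      ((hasDerivAt_pow 3 x).const_mul (a2/3))).add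
      ((hasDerivAt_pow 4 x).const_mul (a3/4))).add
      ((hasDerivAt_pow 5 x).const_mul (a4/5))).add
      ((hasDerivAt_pow 6 x).const_mul (a5/6))).add
      ((hasDerivAt_pow 7 x).const_mul (a6/7))
    refine this.congr_deriv ?_
    push_cast
    ring
  rw [intervalIntegral.integral_eq_sub_of_hasDerivAt h
      ((Continuous.intervalIntegrable (by fun_prop) 0 1))]
  norm_num

/-- For the two-iterated FGM copula, the first three bivariate copula L-moments are
`δ₁ = 2∫₀¹∫₀¹ (C − uv) du dv = α₁/18 + α₂/72 + α₃/450`,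
`δ₂ = ∫₀¹∫₀¹ (C − uv)(12v − 6) dv du = α₂/120`,
`δ₃ = ∫₀¹∫₀¹ (C − uv)(60v² − 60v + 12) dv du = −α₃/1050`. -/
theorem twoIteratedFGM_first_three_copula_Lmoments (α₁ α₂ α₃ : ℝ) :
    (2 * (∫ u in (0:ℝ)..1, ∫ v in (0:ℝ)..1, (twoIteratedFGM α₁ α₂ α₃ u v - u * v))
        = α₁ / 18 + α₂ / 72 + α₃ / 450) ∧
    ((∫ u in (0:ℝ)..1, ∫ v in (0:ℝ)..1,
          (twoIteratedFGM α₁ α₂ α₃ u v - u * v) * (12 * v - 6))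
        = α₂ / 120) ∧
    ((∫ u in (0:ℝ)..1, ∫ v in (0:ℝ)..1,
          (twoIteratedFGM α₁ α₂ α₃ u v - u * v) * (60 * v ^ 2 - 60 * v + 12))
        = -α₃ / 1050) := by
  refine ⟨?_, ?_, ?_⟩
  · have h1 : ∀ u : ℝ, (∫ v in (0:ℝ)..1, (twoIteratedFGM α₁ α₂ α₃ u v - u * v))
        = (0:ℝ) + (α₁/6)*u + (-α₁/6 + α₂/12 + α₃/30)*u^2
          + (-α₂/12 - α₃/15)*u^3 + (α₃/30)*u^4 + 0*u^5 + 0*u^6 := by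
      intro u
      have hf : (fun v => twoIteratedFGM α₁ α₂ α₃ u v - u * v)
          = fun v => (0:ℝ) + (α₁*(u - u^2))*v
            + (α₁*(u^2 - u) + α₂*(u^2 - u^3) + α₃*(u^2 - 2*u^3 + u^4))*v^2
            + (α₂*(u^3 - u^2) + α₃*(-2*u^2 + 4*u^3 - 2*u^4))*v^3
            + (α₃*(u^2 - 2*u^3 + u^4))*v^4 + 0*v^5 + 0*v^6 := by
        funext v; simp only [twoIteratedFGM]; ring
      rw [hf, ipoly]; ring
    simp only [h1]
    rw [ipoly]; ring
  · have h1 : ∀ u : ℝ, (∫ v in (0:ℝ)..1,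
          (twoIteratedFGM α₁ α₂ α₃ u v - u * v) * (12 * v - 6))
        = (0:ℝ) + 0*u + (α₂/10)*u^2 + (-α₂/10)*u^3 + 0*u^4 + 0*u^5 + 0*u^6 := by
      intro u
      have hf : (fun v => (twoIteratedFGM α₁ α₂ α₃ u v - u * v) * (12 * v - 6))
          = fun v => (0:ℝ) + (α₁*(-6*u + 6*u^2))*v
            + (α₁*(18*u - 18*u^2) + α₂*(-6*u^2 + 6*u^3)
               + α₃*(-6*u^2 + 12*u^3 - 6*u^4))*v^2
            + (α₁*(-12*u + 12*u^2) + α₂*(18*u^2 - 18*u^3)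
               + α₃*(24*u^2 - 48*u^3 + 24*u^4))*v^3
            + (α₂*(-12*u^2 + 12*u^3) + α₃*(-30*u^2 + 60*u^3 - 30*u^4))*v^4
            + (α₃*(12*u^2 - 24*u^3 + 12*u^4))*v^5 + 0*v^6 := by
        funext v; simp only [twoIteratedFGM]; ring
      rw [hf, ipoly]; ring
    simp only [h1]
    rw [ipoly]; ring
  · have h1 : ∀ u : ℝ, (∫ v in (0:ℝ)..1,
          (twoIteratedFGM α₁ α₂ α₃ u v - u * v) * (60 * v ^ 2 - 60 * v + 12))
        = (0:ℝ) + 0*u + (-α₃/35)*u^2 + (2*α₃/35)*u^3 + (-α₃/35)*u^4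
          + 0*u^5 + 0*u^6 := by
      intro u
      have hf : (fun v => (twoIteratedFGM α₁ α₂ α₃ u v - u * v)
            * (60 * v ^ 2 - 60 * v + 12))
          = fun v => (0:ℝ) + (α₁*(12*u - 12*u^2))*v
            + (α₁*(-72*u + 72*u^2) + α₂*(12*u^2 - 12*u^3)
               + α₃*(12*u^2 - 24*u^3 + 12*u^4))*v^2
            + (α₁*(120*u - 120*u^2) + α₂*(-72*u^2 + 72*u^3)
               + α₃*(-84*u^2 + 168*u^3 - 84*u^4))*v^3
            + (α₁*(-60*u + 60*u^2) + α₂*(120*u^2 - 120*u^3)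
               + α₃*(192*u^2 - 384*u^3 + 192*u^4))*v^4
            + (α₂*(-60*u^2 + 60*u^3) + α₃*(-180*u^2 + 360*u^3 - 180*u^4))*v^5
            + (α₃*(60*u^2 - 120*u^3 + 60*u^4))*v^6 := by
        funext v; simp only [twoIteratedFGM]; ring
      rw [hf, ipoly]; ring
    simp only [h1]
    rw [ipoly]; ring
end

section
/- For the one-iterated FGM copula with parameters (α₁,α₂), Spearman's rho equals ρ(α₁,α₂) = 12 ∫₀¹∫₀¹ u v · c_{α₁,α₂}(u,v) du dv − 3 = α₁/3 + α₂/12, where c_{α₁,α₂}(u,v) = 1 + α₁(1−2u)(1−2v) + α₂(2u−3u²)(2v−3v²) is the mixed second partial derivative ∂²C_{α₁,α₂}/∂u∂v. -/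
open MeasureTheory

lemma cubic_integral (a b c : ℝ) :
    (∫ x in (0:ℝ)..1, (a * x + b * x^2 + c * x^3)) = a/2 + b/3 + c/4 := by
  have h1 : IntervalIntegrable (fun x : ℝ => a * x) MeasureTheory.volume 0 1 :=
    (by fun_prop : Continuous fun x : ℝ => a * x).intervalIntegrable 0 1
  have h2 : IntervalIntegrable (fun x : ℝ => b * x^2) MeasureTheory.volume 0 1 :=
    (by fun_prop : Continuous fun x : ℝ => b * x^2).intervalIntegrable 0 1
  have h3 : IntervalIntegrable (fun x : ℝ => c * x^3) MeasureTheory.volume 0 1 :=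
    (by fun_prop : Continuous fun x : ℝ => c * x^3).intervalIntegrable 0 1
  rw [intervalIntegral.integral_add (h1.add h2) h3, intervalIntegral.integral_add h1 h2,
    intervalIntegral.integral_const_mul, intervalIntegral.integral_const_mul,
    intervalIntegral.integral_const_mul]
  rw [show (fun x : ℝ => x) = fun x : ℝ => x^(1:ℕ) by funext x; ring,
    integral_pow, integral_pow, integral_pow]
  norm_num; ring

/-- For the one-iterated FGM copula with parameters `(α₁,α₂)` and density
`c(u,v) = 1 + α₁(1−2u)(1−2v) + α₂(2u−3u²)(2v−3v²)`, Spearman's rho equals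
`ρ = 12∫₀¹∫₀¹ uv·c(u,v) du dv − 3 = α₁/3 + α₂/12`. -/
theorem iteratedFGM_spearman_rho (α₁ α₂ : ℝ) :
    12 * (∫ u in (0:ℝ)..1, ∫ v in (0:ℝ)..1,
        u * v * (1 + α₁ * (1 - 2*u) * (1 - 2*v)
          + α₂ * (2*u - 3*u^2) * (2*v - 3*v^2))) - 3
      = α₁ / 3 + α₂ / 12 := by
  have h : ∀ u : ℝ, (∫ v in (0:ℝ)..1,
      u * v * (1 + α₁ * (1 - 2*u) * (1 - 2*v)
        + α₂ * (2*u - 3*u^2) * (2*v - 3*v^2)))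
      = u/2 + α₁ * (1 - 2*u) * u * (-1/6) + α₂ * (2*u - 3*u^2) * u * (-1/12) := by
    intro u
    have e : ∀ v : ℝ, u * v * (1 + α₁ * (1 - 2*u) * (1 - 2*v)
        + α₂ * (2*u - 3*u^2) * (2*v - 3*v^2))
        = (u + α₁ * (1 - 2*u) * u) * v
          + (α₁ * (1 - 2*u) * u * (-2) + α₂ * (2*u - 3*u^2) * u * 2) * v^2
          + (α₂ * (2*u - 3*u^2) * u * (-3)) * v^3 := by
      intro v; ring
    simp only [e]
    rw [cubic_integral]; ring
  simp only [h]
  have e2 : ∀ u : ℝ, u/2 + α₁ * (1 - 2*u) * u * (-1/6) + α₂ * (2*u - 3*u^2) * u * (-1/12)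
      = (1/2 + α₁ * (-1/6)) * u + (α₁ * (1/3) + α₂ * (-1/6)) * u^2
        + (α₂ * (1/4)) * u^3 := by
    intro u; ring
  simp only [e2]
  rw [cubic_integral]; ring
end

section
/- For the one-iterated FGM copula with parameters (α₁,α₂), Kendall's tau equals τ(α₁,α₂) = 4 ∫₀¹∫₀¹ C_{α₁,α₂}(u,v) · c_{α₁,α₂}(u,v) du dv − 1 = 2α₁/9 + α₂/18 + α₁α₂/450, where c_{α₁,α₂}(u,v) = 1 + α₁(1−2u)(1−2v) + α₂(2u−3u²)(2v−3v²) is the mixed second partial derivative ∂²C_{α₁,α₂}/∂u∂v. -/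
open MeasureTheory

/-- Integral of a quintic polynomial over `[0,1]`. -/
lemma poly_integral_01 (c0 c1 c2 c3 c4 c5 : ℝ) :
    (∫ x in (0:ℝ)..1, (c0 + c1*x + c2*x^2 + c3*x^3 + c4*x^4 + c5*x^5))
      = c0 + c1/2 + c2/3 + c3/4 + c4/5 + c5/6 := by
  have hderiv : ∀ x ∈ Set.uIcc (0:ℝ) 1,
      HasDerivAt (fun x : ℝ => c0*x + c1/2*x^2 + c2/3*x^3 + c3/4*x^4 + c4/5*x^5 + c5/6*x^6)
        (c0 + c1*x + c2*x^2 + c3*x^3 + c4*x^4 + c5*x^5) x := by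
    intro x _
    have h1 : HasDerivAt (fun x : ℝ => x) 1 x := hasDerivAt_id x
    have h2 := hasDerivAt_pow 2 x
    have h3 := hasDerivAt_pow 3 x
    have h4 := hasDerivAt_pow 4 x
    have h5 := hasDerivAt_pow 5 x
    have h6 := hasDerivAt_pow 6 x
    have := ((((((h1.const_mul c0).add (h2.const_mul (c1/2))).add
      (h3.const_mul (c2/3))).add (h4.const_mul (c3/4))).add
      (h5.const_mul (c4/5))).add (h6.const_mul (c5/6)))
    refine this.congr_deriv ?_
    push_cast
    ring
  have hint : IntervalIntegrable
      (fun x : ℝ => c0 + c1*x + c2*x^2 + c3*x^3 + c4*x^4 + c5*x^5)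
      MeasureTheory.volume 0 1 := by
    apply Continuous.intervalIntegrable
    continuity
  rw [intervalIntegral.integral_eq_sub_of_hasDerivAt hderiv hint]
  norm_num

/-- For the one-iterated FGM copula `C(u,v) = uv(1 + α₁(1−u)(1−v) + α₂uv(1−u)(1−v))`
with density `c(u,v) = 1 + α₁(1−2u)(1−2v) + α₂(2u−3u²)(2v−3v²)`, Kendall's tau equals
`τ = 4∫₀¹∫₀¹ C(u,v)·c(u,v) du dv − 1 = 2α₁/9 + α₂/18 + α₁α₂/450`. -/
theorem iteratedFGM_kendall_tau (α₁ α₂ : ℝ) :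
    4 * (∫ u in (0:ℝ)..1, ∫ v in (0:ℝ)..1,
        (u * v * (1 + α₁ * (1 - u) * (1 - v) + α₂ * u * v * (1 - u) * (1 - v)))
          * (1 + α₁ * (1 - 2*u) * (1 - 2*v)
              + α₂ * (2*u - 3*u^2) * (2*v - 3*v^2))) - 1
      = 2 * α₁ / 9 + α₂ / 18 + α₁ * α₂ / 450 := by
  have inner : ∀ u : ℝ,
      (∫ v in (0:ℝ)..1,
        (u * v * (1 + α₁ * (1 - u) * (1 - v) + α₂ * u * v * (1 - u) * (1 - v)))
          * (1 + α₁ * (1 - 2*u) * (1 - 2*v)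
              + α₂ * (2*u - 3*u^2) * (2*v - 3*v^2)))
      = 0 + (1/2)*u + (α₁/6 - α₂/12 + α₁*α₂/60)*u^2
          + (α₂/6 - α₁*α₂/30)*u^3 + (α₁*α₂/60)*u^4 + 0*u^5 := by
    intro u
    have h : (∫ v in (0:ℝ)..1,
        (u * v * (1 + α₁ * (1 - u) * (1 - v) + α₂ * u * v * (1 - u) * (1 - v)))
          * (1 + α₁ * (1 - 2*u) * (1 - 2*v)
              + α₂ * (2*u - 3*u^2) * (2*v - 3*v^2)))
        = ∫ v in (0:ℝ)..1,
          ((0:ℝ)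
            + (u + 2*u*α₁ + u*α₁^2 - 3*u^2*α₁ - 3*u^2*α₁^2 + 2*u^3*α₁^2)*v
            + (-3*u*α₁ - 3*u*α₁^2 + 5*u^2*α₂ + 5*u^2*α₁ + 5*u^2*α₁*α₂ + 9*u^2*α₁^2
                - 7*u^3*α₂ - 13*u^3*α₁*α₂ - 6*u^3*α₁^2 + 8*u^4*α₁*α₂)*v^2
            + (2*u*α₁^2 - 7*u^2*α₂ - 13*u^2*α₁*α₂ - 6*u^2*α₁^2 + 10*u^3*α₂ + 4*u^3*α₂^2
                + 34*u^3*α₁*α₂ + 4*u^3*α₁^2 - 10*u^4*α₂^2 - 21*u^4*α₁*α₂ + 6*u^5*α₂^2)*v^3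
            + (8*u^2*α₁*α₂ - 10*u^3*α₂^2 - 21*u^3*α₁*α₂ + 25*u^4*α₂^2 + 13*u^4*α₁*α₂
                - 15*u^5*α₂^2)*v^4
            + (6*u^3*α₂^2 - 15*u^4*α₂^2 + 9*u^5*α₂^2)*v^5) := by
      apply intervalIntegral.integral_congr
      intro v _
      ring
    rw [h, poly_integral_01]
    ring
  have h2 : (∫ u in (0:ℝ)..1, ∫ v in (0:ℝ)..1,
        (u * v * (1 + α₁ * (1 - u) * (1 - v) + α₂ * u * v * (1 - u) * (1 - v)))
          * (1 + α₁ * (1 - 2*u) * (1 - 2*v)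
              + α₂ * (2*u - 3*u^2) * (2*v - 3*v^2)))
      = ∫ u in (0:ℝ)..1,
          ((0:ℝ) + (1/2)*u + (α₁/6 - α₂/12 + α₁*α₂/60)*u^2
            + (α₂/6 - α₁*α₂/30)*u^3 + (α₁*α₂/60)*u^4 + 0*u^5) := by
    apply intervalIntegral.integral_congr
    intro u _
    exact inner u
  rw [h2, poly_integral_01]
  ring
end

section
/- Over the admissible parameter region R of the one-iterated FGM family, Spearman's rho ρ(α₁,α₂) = α₁/3 + α₂/12 attains its minimum value −1/3, i.e., for every (α₁,α₂) ∈ R one has α₁/3 + α₂/12 ≥ −1/3, with equality if and only if (α₁,α₂) = (−1,0) (which belongs to R). -/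
/-- The admissible parameter region of the one-iterated FGM family. -/
def iteratedFGMRegion : Set (ℝ × ℝ) :=
  {p | |p.1| ≤ 1 ∧ p.1 + p.2 ≥ -1 ∧
    p.2 ≤ (3 - p.1 + Real.sqrt (9 - 6 * p.1 - 3 * p.1 ^ 2)) / 2}

/-- Over the admissible region of the one-iterated FGM family, Spearman's rho
`ρ(α₁,α₂) = α₁/3 + α₂/12` attains its minimum value `−1/3`, with equality if and
only if `(α₁,α₂) = (−1,0)`, which belongs to the region. -/
theorem iteratedFGM_spearman_min :
    ((-1 : ℝ), (0 : ℝ)) ∈ iteratedFGMRegion ∧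
    ∀ α₁ α₂ : ℝ, (α₁, α₂) ∈ iteratedFGMRegion →
      (-1/3 ≤ α₁ / 3 + α₂ / 12 ∧
        (α₁ / 3 + α₂ / 12 = -1/3 ↔ (α₁ = -1 ∧ α₂ = 0))) := by
  constructor
  · refine ⟨by norm_num, by norm_num, ?_⟩
    have h : (0:ℝ) ≤ Real.sqrt (9 - 6 * (-1) - 3 * (-1) ^ 2) := Real.sqrt_nonneg _
    simp only
    positivity
  · rintro α₁ α₂ ⟨h1, h2, h3⟩
    have ha : -1 ≤ α₁ := (abs_le.mp h1).1
    constructor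
    · nlinarith
    · constructor
      · intro h
        constructor <;> nlinarith
      · rintro ⟨rfl, rfl⟩; norm_num
end

section
/- Over the admissible parameter region R of the one-iterated FGM family, Spearman's rho ρ(α₁,α₂) = α₁/3 + α₂/12 attains its maximum value (√13 − 1)/6 at the point (α₁,α₂) = (−1 + 7/√13, 2 − 2/√13) ∈ R; i.e., for every (α₁,α₂) ∈ R one has α₁/3 + α₂/12 ≤ (√13 − 1)/6, with equality at (−1 + 7/√13, 2 − 2/√13). -/
/-- Over the admissible region of the one-iterated FGM family, Spearman's rho
`ρ(α₁,α₂) = α₁/3 + α₂/12` attains its maximum value `(√13 − 1)/6` at the point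
`(α₁,α₂) = (−1 + 7/√13, 2 − 2/√13)`, which belongs to the region. -/
theorem iteratedFGM_spearman_max :
    ((-1 + 7 / Real.sqrt 13, 2 - 2 / Real.sqrt 13) ∈ iteratedFGMRegion) ∧
    (∀ α₁ α₂ : ℝ, (α₁, α₂) ∈ iteratedFGMRegion →
      α₁ / 3 + α₂ / 12 ≤ (Real.sqrt 13 - 1) / 6) ∧
    ((-1 + 7 / Real.sqrt 13) / 3 + (2 - 2 / Real.sqrt 13) / 12
      = (Real.sqrt 13 - 1) / 6) := by
  set s := Real.sqrt 13 with hs_def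
  have hs0 : 0 < s := Real.sqrt_pos.mpr (by norm_num)
  have hs2 : s ^ 2 = 13 := Real.sq_sqrt (by norm_num)
  have hs3 : s ≥ 18 / 5 := by nlinarith
  have h7pos : 0 < 7 / s := div_pos (by norm_num) hs0
  have h2pos : 0 < 2 / s := div_pos (by norm_num) hs0
  have h72 : 7 / s ≤ 2 := by rw [div_le_iff₀ hs0]; linarith
  refine ⟨⟨?_, ?_, ?_⟩, ?_, ?_⟩
  · rw [abs_le]
    constructor <;> simp only <;> linarith
  · simp only
    have h27 : 2 / s ≤ 7 / s := by gcongr; norm_num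
    linarith
  · simp only
    have harg : 9 - 6 * (-1 + 7 / s) - 3 * (-1 + 7 / s) ^ 2 = (3 / s) ^ 2 := by
      field_simp
      linear_combination (12) * hs2
    rw [harg, Real.sqrt_sq (by positivity)]
    have : (3 : ℝ) - (-1 + 7 / s) + 3 / s = 2 * (2 - 2 / s) := by ring
    rw [this]
    linarith
  · rintro α₁ α₂ ⟨h1, h2, h3⟩
    simp only at h1 h2 h3
    rw [abs_le] at h1
    have hD : 0 ≤ 9 - 6 * α₁ - 3 * α₁ ^ 2 := by nlinarith [h1.1, h1.2]
    set t := Real.sqrt (9 - 6 * α₁ - 3 * α₁ ^ 2) with ht_def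
    have ht0 : 0 ≤ t := Real.sqrt_nonneg _
    have ht2 : t ^ 2 = 9 - 6 * α₁ - 3 * α₁ ^ 2 := Real.sq_sqrt hD
    have hb : 0 ≤ 4 * s - 7 - 7 * α₁ := by nlinarith [h1.2]
    have hkey : t ≤ 4 * s - 7 - 7 * α₁ := by
      nlinarith [sq_nonneg (13 * α₁ + 13 - 7 * s), sq_nonneg (t - (4 * s - 7 - 7 * α₁))]
    linarith
  · field_simp
    linear_combination (-36) * hs2
end

section
/- Let Y be an integrable real random variable with continuous distribution function F_Y and quantile function F_Y^{−1}(u) = inf{x : F_Y(x) ≥ u}. Then for every integer k ≥ 2, the k-th L-moment admits the covariance representation ∫₀¹ F_Y^{−1}(u) P_{k−1}(u) du = Cov(Y, P_{k−1}(F_Y(Y))), where P_{k−1} is the (k−1)-th shifted Legendre polynomial. -/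
open MeasureTheory Set

section Combinatorics

lemma partial_sum_id (m : ℕ) : ∀ d : ℕ,
    ∑ l ∈ Finset.range (m + 1),
      (-1:ℝ)^l * (Nat.factorial (m+1+d + l) : ℝ) /
        ((Nat.factorial l : ℝ)^2 * (Nat.factorial (m+1+d - l) : ℝ)) * (1 / (l+1))
    = (-1:ℝ)^m * (Nat.factorial (m+1+d+m)) * ((d:ℝ)+1) * (2*m+d+2) /
        ((Nat.factorial m) * (Nat.factorial (m+1)) * (Nat.factorial (d+1))
          * ((m:ℝ)+1+d) * ((m:ℝ)+2+d)) := by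
  induction m with
  | zero =>
    intro d
    have hD : (Nat.factorial d : ℝ) ≠ 0 := Nat.cast_ne_zero.2 (Nat.factorial_ne_zero d)
    have h1 : (0:ℕ)+1+d-0 = d+1 := by omega
    have h2 : (0:ℕ)+1+d+0 = d+1 := by omega
    simp only [Finset.sum_range_succ, Finset.sum_range_zero, h1, h2, Nat.factorial_succ, Nat.factorial_zero]
    push_cast
    have hd2 : (d:ℝ) + 2 ≠ 0 := by positivity
    have hd1 : (d:ℝ) + 1 ≠ 0 := by positivity
    field_simp
    ring
  | succ n ih =>
    intro d
    rw [Finset.sum_range_succ]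
    have hidx : n+1+1+d = n+1+(d+1) := by omega
    rw [show n+1+1+d = n+1+(d+1) from by omega] -- rewrite everywhere
    rw [ih (d+1)]
    have h1 : n+1+(d+1) - (n+1) = d+1 := by omega
    have h2 : n+1+(d+1)+(n+1) = (n+1+(d+1)+n)+1 := by omega
    rw [h1, h2, Nat.factorial_succ (n+1+(d+1)+n)]
    have h3 : n+1+(d+1)+n = 2*n+d+2 := by omega
    rw [h3]
    simp only [Nat.factorial_succ]
    push_cast
    set A := (Nat.factorial n : ℝ) with hA
    set B := (Nat.factorial (2*n+d+2) : ℝ) with hB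
    set D := (Nat.factorial d : ℝ) with hD
    have hA0 : A ≠ 0 := Nat.cast_ne_zero.2 (Nat.factorial_ne_zero n)
    have hB0 : B ≠ 0 := Nat.cast_ne_zero.2 (Nat.factorial_ne_zero _)
    have hD0 : D ≠ 0 := Nat.cast_ne_zero.2 (Nat.factorial_ne_zero d)
    have e1 : (n:ℝ)+1 ≠ 0 := by positivity
    have e2 : (n:ℝ)+2 ≠ 0 := by positivity
    have e3 : (d:ℝ)+1 ≠ 0 := by positivity
    have e4 : (d:ℝ)+2 ≠ 0 := by positivity
    have e5 : (n:ℝ)+1+(d+1) ≠ 0 := by positivity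
    have e6 : (n:ℝ)+2+(d+1) ≠ 0 := by positivity
    have e7 : (n:ℝ)+1+1+d ≠ 0 := by positivity
    have e8 : (n:ℝ)+1+2+d ≠ 0 := by positivity
    field_simp
    ring

lemma legendre_sum_zero (m : ℕ) :
    ∑ l ∈ Finset.range (m+2), (-1:ℝ)^(m+1+l) * (Nat.factorial (m+1+l) : ℝ) /
        ((Nat.factorial l : ℝ)^2 * (Nat.factorial (m+1-l) : ℝ)) * (1/(l+1)) = 0 := by
  have h := partial_sum_id m 0
  simp only [Nat.add_zero] at h
  rw [show m+2 = (m+1)+1 from rfl, Finset.sum_range_succ]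
  have hs : ∀ l : ℕ, (-1:ℝ)^(m+1+l) * (Nat.factorial (m+1+l) : ℝ) /
        ((Nat.factorial l : ℝ)^2 * (Nat.factorial (m+1-l) : ℝ)) * (1/(l+1))
      = (-1:ℝ)^(m+1) * ((-1:ℝ)^l * (Nat.factorial (m+1+l) : ℝ) /
        ((Nat.factorial l : ℝ)^2 * (Nat.factorial (m+1-l) : ℝ)) * (1/(l+1))) := by
    intro l; rw [pow_add]; ring
  simp_rw [hs]
  rw [← Finset.mul_sum, h]
  have h1 : m+1-(m+1) = 0 := by omega
  have h2 : m+1+(m+1) = (m+1+m)+1 := by omega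
  rw [h1, h2, Nat.factorial_succ (m+1+m)]
  simp only [Nat.factorial_zero, Nat.factorial_one, Nat.factorial_succ]
  push_cast
  set A := (Nat.factorial m : ℝ) with hA
  set B := (Nat.factorial (m+1+m) : ℝ) with hB
  have hA0 : A ≠ 0 := Nat.cast_ne_zero.2 (Nat.factorial_ne_zero m)
  have hB0 : B ≠ 0 := Nat.cast_ne_zero.2 (Nat.factorial_ne_zero _)
  have e1 : (m:ℝ)+1 ≠ 0 := by positivity
  have e2 : (m:ℝ)+2 ≠ 0 := by positivity
  have e3 : (m:ℝ)+1+1 ≠ 0 := by positivity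
  have e4 : (m:ℝ)+1+0 ≠ 0 := by positivity
  have e5 : (m:ℝ)+2+0 ≠ 0 := by positivity
  rcases Nat.even_or_odd m with hm | hm
  · have p1 : (-1:ℝ)^m = 1 := hm.neg_one_pow
    have p2 : (-1:ℝ)^(m+1) = -1 := (hm.add_one).neg_one_pow
    rw [p1, p2]
    field_simp
    ring
  · have p1 : (-1:ℝ)^m = -1 := hm.neg_one_pow
    have p2 : (-1:ℝ)^(m+1) = 1 := (hm.add_one).neg_one_pow
    rw [p1, p2]
    field_simp
    ring

lemma continuous_shiftedLegendre (k : ℕ) : Continuous (shiftedLegendre k) := by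
  unfold shiftedLegendre
  exact continuous_finset_sum _ fun l _ => (continuous_const.mul (continuous_pow l))

lemma integral_shiftedLegendre_zero (m : ℕ) :
    ∫ u in (0:ℝ)..1, shiftedLegendre (m+1) u = 0 := by
  unfold shiftedLegendre
  rw [intervalIntegral.integral_finset_sum
    (fun l _ => (intervalIntegral.intervalIntegrable_pow l).const_mul _)]
  have hterm : ∀ l : ℕ,
      (∫ u in (0:ℝ)..1, (-1:ℝ)^(m+1+l) * (Nat.factorial (m+1+l) : ℝ) /
          ((Nat.factorial l : ℝ)^2 * (Nat.factorial (m+1-l) : ℝ)) * u^l)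
      = (-1:ℝ)^(m+1+l) * (Nat.factorial (m+1+l) : ℝ) /
          ((Nat.factorial l : ℝ)^2 * (Nat.factorial (m+1-l) : ℝ)) * (1/(l+1)) := by
    intro l
    rw [intervalIntegral.integral_const_mul, integral_pow]
    norm_num
  exact (Finset.sum_congr rfl fun l _ => hterm l).trans (legendre_sum_zero m)

end Combinatorics

/-- **Covariance representation of univariate L-moments.** If `Y` is integrable with
continuous distribution function `F_Y` and quantile function
`F_Y⁻¹(u) = inf{x : F_Y(x) ≥ u}`, then for every `k ≥ 2`,
`∫₀¹ F_Y⁻¹(u) P_{k−1}(u) du = Cov(Y, P_{k−1}(F_Y(Y)))`. -/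
theorem univariate_Lmoment_cov_representation
    {Ω : Type*} [MeasurableSpace Ω] (P : Measure Ω) [IsProbabilityMeasure P]
    (Y : Ω → ℝ) (hY : Integrable Y P)
    (F : ℝ → ℝ) (hF : ∀ x, F x = (P {ω | Y ω ≤ x}).toReal)
    (hFc : Continuous F)
    (Q : ℝ → ℝ) (hQ : ∀ u, Q u = sInf {x | u ≤ F x})
    (k : ℕ) (hk : 2 ≤ k) :
    (∫ u in (0:ℝ)..1, Q u * shiftedLegendre (k - 1) u)
      = (∫ ω, Y ω * shiftedLegendre (k - 1) (F (Y ω)) ∂P)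
        - (∫ ω, Y ω ∂P) * (∫ ω, shiftedLegendre (k - 1) (F (Y ω)) ∂P) := by
  obtain ⟨j, rfl⟩ : ∃ j, k = j + 2 := ⟨k - 2, by omega⟩
  set L : ℝ → ℝ := shiftedLegendre (j + 1) with hL
  have hk1 : j + 2 - 1 = j + 1 := rfl
  rw [hk1]
  have hYm : AEMeasurable Y P := hY.aemeasurable
  set μ : Measure ℝ := P.map Y with hμ
  haveI : IsProbabilityMeasure μ := Measure.isProbabilityMeasure_map hYm
  have hFμ : ∀ x, F x = (μ (Iic x)).toReal := by
    intro x
    rw [hF, hμ, Measure.map_apply_of_aemeasurable hYm measurableSet_Iic]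
    rfl
  have hFcdf : ∀ x, F x = ProbabilityTheory.cdf μ x := fun x => by
    rw [hFμ]; exact (ProbabilityTheory.cdf_eq_real μ x).symm
  have hFmono : Monotone F := by
    intro a b hab
    rw [hFcdf, hFcdf]
    exact (ProbabilityTheory.cdf μ).mono hab
  have hFbot : Filter.Tendsto F Filter.atBot (nhds 0) := by
    have := ProbabilityTheory.tendsto_cdf_atBot μ
    refine this.congr fun x => (hFcdf x).symm
  have hFtop : Filter.Tendsto F Filter.atTop (nhds 1) := by
    have := ProbabilityTheory.tendsto_cdf_atTop μ
    refine this.congr fun x => (hFcdf x).symm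
  -- basic properties of the quantile function on (0,1)
  have hbdd : ∀ u : ℝ, 0 < u → BddBelow {x | u ≤ F x} := by
    intro u hu
    obtain ⟨x0, hx0⟩ : ∃ x0, F x0 < u := (hFbot.eventually (eventually_lt_nhds hu)).exists
    refine ⟨x0, fun x hx => ?_⟩
    by_contra hlt
    exact absurd (le_trans hx (hFmono (le_of_not_ge hlt))) (not_le.2 hx0)
  have hne : ∀ u : ℝ, u < 1 → {x | u ≤ F x}.Nonempty := by
    intro u hu
    obtain ⟨x1, hx1⟩ : ∃ x1, u < F x1 := (hFtop.eventually (eventually_gt_nhds hu)).exists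
    exact ⟨x1, le_of_lt hx1⟩
  have hclosed : ∀ u : ℝ, IsClosed {x | u ≤ F x} := fun u =>
    isClosed_le continuous_const hFc
  have hmemQ : ∀ u ∈ Ioo (0:ℝ) 1, u ≤ F (Q u) := by
    intro u hu
    rw [hQ]
    exact (hclosed u).csInf_mem (hne u hu.2) (hbdd u hu.1)
  have hFQ : ∀ u ∈ Ioo (0:ℝ) 1, F (Q u) = u := by
    intro u hu
    refine le_antisymm ?_ (hmemQ u hu)
    obtain ⟨a, ha⟩ : ∃ a, F a < u := (hFbot.eventually (eventually_lt_nhds hu.1)).exists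
    obtain ⟨b, hb⟩ : ∃ b, u < F b := (hFtop.eventually (eventually_gt_nhds hu.2)).exists
    have hab : a ≤ b := by
      by_contra hba
      exact absurd (hFmono (le_of_not_ge hba)) (not_le.2 (lt_trans ha hb))
    obtain ⟨x, _, hx⟩ : u ∈ F '' Icc a b :=
      intermediate_value_Icc hab hFc.continuousOn ⟨le_of_lt ha, le_of_lt hb⟩
    have hQle : Q u ≤ x := by
      rw [hQ]
      exact csInf_le (hbdd u hu.1) (by simp [hx.ge] : x ∈ {x | u ≤ F x})
    calc F (Q u) ≤ F x := hFmono hQle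
      _ = u := hx
  have hQiff : ∀ u ∈ Ioo (0:ℝ) 1, ∀ a : ℝ, Q u ≤ a ↔ u ≤ F a := by
    intro u hu a
    constructor
    · intro h
      calc u = F (Q u) := (hFQ u hu).symm
        _ ≤ F a := hFmono h
    · intro h
      rw [hQ]
      exact csInf_le (hbdd u hu.1) h
  -- a measurable version of Q
  set g : ℝ → ℝ := (Ioo (0:ℝ) 1).indicator Q with hg
  have hgm : Measurable g := by
    apply measurable_of_Iic
    intro a
    by_cases h0 : (0:ℝ) ≤ a
    · have : g ⁻¹' Iic a = (Ioo 0 1 ∩ Iic (F a)) ∪ (Ioo (0:ℝ) 1)ᶜ := by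
        ext u
        by_cases hu : u ∈ Ioo (0:ℝ) 1
        · simp [hg, indicator_of_mem hu, hu, hQiff u hu a]
        · simp [hg, indicator_of_notMem hu, hu, h0]
      rw [this]
      exact ((measurableSet_Ioo.inter measurableSet_Iic).union measurableSet_Ioo.compl)
    · have : g ⁻¹' Iic a = Ioo 0 1 ∩ Iic (F a) := by
        ext u
        by_cases hu : u ∈ Ioo (0:ℝ) 1
        · simp [hg, indicator_of_mem hu, hu, hQiff u hu a]
        · simp [hg, indicator_of_notMem hu, hu, h0]
      rw [this]
      exact measurableSet_Ioo.inter measurableSet_Iic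
  have hQae : AEMeasurable Q (volume.restrict (Ioo (0:ℝ) 1)) := by
    refine ⟨g, hgm, ?_⟩
    rw [Filter.EventuallyEq, ae_restrict_iff' measurableSet_Ioo]
    exact Filter.Eventually.of_forall fun u hu => (indicator_of_mem hu Q).symm
  -- the pushforward of Lebesgue measure on (0,1) under Q is μ
  have hmap : (volume.restrict (Ioo (0:ℝ) 1)).map Q = μ := by
    haveI : IsProbabilityMeasure ((volume.restrict (Ioo (0:ℝ) 1)).map Q) := by
      constructor
      rw [Measure.map_apply_of_aemeasurable hQae MeasurableSet.univ]
      simp [Real.volume_Ioo]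
    refine Measure.ext_of_Iic _ _ fun a => ?_
    rw [Measure.map_apply_of_aemeasurable hQae measurableSet_Iic,
      Measure.restrict_apply' measurableSet_Ioo]
    have hseteq : Q ⁻¹' Iic a ∩ Ioo 0 1 = Iic (F a) ∩ Ioo 0 1 := by
      ext u
      constructor
      · rintro ⟨h1, h2⟩
        exact ⟨(hQiff u h2 a).1 h1, h2⟩
      · rintro ⟨h1, h2⟩
        exact ⟨(hQiff u h2 a).2 h1, h2⟩
    rw [hseteq]
    have hFa0 : 0 ≤ F a := by rw [hFcdf]; exact ProbabilityTheory.cdf_nonneg μ a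
    have hFa1 : F a ≤ 1 := by rw [hFcdf]; exact ProbabilityTheory.cdf_le_one μ a
    have hμa : μ (Iic a) = ENNReal.ofReal (F a) := by
      rw [hFcdf]; exact (ProbabilityTheory.ofReal_cdf μ a).symm
    rw [hμa]
    by_cases hc : F a < 1
    · have : Iic (F a) ∩ Ioo (0:ℝ) 1 = Ioc 0 (F a) := by
        ext x
        simp only [mem_inter_iff, mem_Iic, mem_Ioo, mem_Ioc]
        constructor
        · rintro ⟨h1, h2, h3⟩; exact ⟨h2, h1⟩
        · rintro ⟨h1, h2⟩; exact ⟨h2, h1, lt_of_le_of_lt h2 hc⟩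
      rw [this, Real.volume_Ioc]
      simp
    · have hc1 : F a = 1 := le_antisymm hFa1 (not_lt.1 hc)
      have : Iic (F a) ∩ Ioo (0:ℝ) 1 = Ioo 0 1 := by
        rw [hc1]
        ext x
        simp only [mem_inter_iff, mem_Iic, mem_Ioo]
        exact ⟨fun h => h.2, fun h => ⟨le_of_lt h.2, h⟩⟩
      rw [this, Real.volume_Ioo, hc1]
      norm_num
  -- change of variables
  have key : ∀ f : ℝ → ℝ, Continuous f →
      ∫ ω, f (Y ω) ∂P = ∫ u in Ioo (0:ℝ) 1, f (Q u) := by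
    intro f hf
    have h1 : ∫ ω, f (Y ω) ∂P = ∫ x, f x ∂μ :=
      (integral_map hYm hf.aestronglyMeasurable).symm
    rw [h1, ← hmap, integral_map hQae hf.aestronglyMeasurable]
  have hLc : Continuous L := continuous_shiftedLegendre (j + 1)
  have hLzero : ∫ ω, L (F (Y ω)) ∂P = 0 := by
    rw [key (fun x => L (F x)) (hLc.comp hFc)]
    have : ∫ u in Ioo (0:ℝ) 1, L (F (Q u)) = ∫ u in Ioo (0:ℝ) 1, L u :=
      setIntegral_congr_fun measurableSet_Ioo fun u hu => by rw [hFQ u hu]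
    rw [this, ← MeasureTheory.integral_Ioc_eq_integral_Ioo,
      ← intervalIntegral.integral_of_le (zero_le_one)]
    exact integral_shiftedLegendre_zero j
  have hmain : ∫ ω, Y ω * L (F (Y ω)) ∂P = ∫ u in (0:ℝ)..1, Q u * L u := by
    rw [key (fun x => x * L (F x)) (continuous_id.mul (hLc.comp hFc))]
    have : ∫ u in Ioo (0:ℝ) 1, Q u * L (F (Q u)) = ∫ u in Ioo (0:ℝ) 1, Q u * L u :=
      setIntegral_congr_fun measurableSet_Ioo fun u hu => by rw [hFQ u hu]
    rw [this, ← MeasureTheory.integral_Ioc_eq_integral_Ioo,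
      ← intervalIntegral.integral_of_le (zero_le_one)]
  rw [hLzero, mul_zero, sub_zero, hmain]
end
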